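/- arXiv:2603.03099 — 7 statements merged into one kernel-verified Lean document; each statement's English description precedes it below -/
import Mathlib

section
/- For real numbers a_0 > 0 and a_t ≥ 0 for t = 1,...,T, the sum ∑_{t=1}^{T} a_t/(a_0 + ∑_{s=1}^{t} a_s) is at most log(1 + (∑_{t=1}^{T} a_t)/a_0). -/
lemma key_ineq {x y : ℝ} (hx : 0 < x) (hxy : x ≤ y) :
    (y - x) / y ≤ Real.log y - Real.log x := by
  have hy : 0 < y := lt_of_lt_of_le hx hxy
  have h := Real.log_le_sub_one_of_pos (div_pos hx hy)
  have hlog : Real.log (x / y) = Real.log x - Real.log y := Real.log_div (ne_of_gt hx) (ne_of_gt hy)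
  rw [hlog] at h
  have : (y - x) / y = 1 - x / y := by field_simp
  linarith

lemma aux (a : ℕ → ℝ) (ha0 : 0 < a 0) :
    ∀ T : ℕ, (∀ t, 1 ≤ t → t ≤ T → 0 ≤ a t) →
    ∑ t ∈ Finset.Icc 1 T, a t / (a 0 + ∑ s ∈ Finset.Icc 1 t, a s)
      ≤ Real.log (a 0 + ∑ t ∈ Finset.Icc 1 T, a t) - Real.log (a 0) := by
  intro T
  induction T with
  | zero => intro _; simp
  | succ n ih =>
    intro ha
    have ha' : ∀ t, 1 ≤ t → t ≤ n → 0 ≤ a t := fun t h1 h2 => ha t h1 (le_trans h2 (Nat.le_succ n))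
    have hsum_nonneg : 0 ≤ ∑ t ∈ Finset.Icc 1 n, a t :=
      Finset.sum_nonneg fun t ht => ha' t (Finset.mem_Icc.mp ht).1 (Finset.mem_Icc.mp ht).2
    have han1 : 0 ≤ a (n + 1) := ha (n + 1) (Nat.le_add_left 1 n) le_rfl
    rw [Finset.sum_Icc_succ_top (Nat.le_add_left 1 n), Finset.sum_Icc_succ_top (Nat.le_add_left 1 n)]
    have hSn : 0 < a 0 + ∑ s ∈ Finset.Icc 1 n, a s := by linarith
    have hSn1 : 0 < a 0 + (∑ s ∈ Finset.Icc 1 n, a s + a (n + 1)) := by linarith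
    have hstep : a (n + 1) / (a 0 + ∑ s ∈ Finset.Icc 1 (n + 1), a s)
        ≤ Real.log (a 0 + (∑ s ∈ Finset.Icc 1 n, a s + a (n + 1)))
          - Real.log (a 0 + ∑ s ∈ Finset.Icc 1 n, a s) := by
      rw [Finset.sum_Icc_succ_top (Nat.le_add_left 1 n)]
      have := key_ineq hSn (by linarith : a 0 + ∑ s ∈ Finset.Icc 1 n, a s ≤ a 0 + (∑ s ∈ Finset.Icc 1 n, a s + a (n + 1)))
      have heq : a 0 + (∑ s ∈ Finset.Icc 1 n, a s + a (n + 1)) - (a 0 + ∑ s ∈ Finset.Icc 1 n, a s) = a (n + 1) := by ring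
      rw [heq] at this
      exact this
    rw [Finset.sum_Icc_succ_top (Nat.le_add_left 1 n)] at hstep
    linarith [ih ha']

theorem stmt_0 (T : ℕ) (a : ℕ → ℝ) (ha0 : 0 < a 0)
    (ha : ∀ t, 1 ≤ t → t ≤ T → 0 ≤ a t) :
    ∑ t ∈ Finset.Icc 1 T, a t / (a 0 + ∑ s ∈ Finset.Icc 1 t, a s)
      ≤ Real.log (1 + (∑ t ∈ Finset.Icc 1 T, a t) / a 0) := by
  have h := aux a ha0 T ha
  have heq : 1 + (∑ t ∈ Finset.Icc 1 T, a t) / a 0 = (a 0 + ∑ t ∈ Finset.Icc 1 T, a t) / a 0 := by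
    field_simp
  have hpos : 0 < a 0 + ∑ t ∈ Finset.Icc 1 T, a t := by
    have : 0 ≤ ∑ t ∈ Finset.Icc 1 T, a t :=
      Finset.sum_nonneg fun t ht => ha t (Finset.mem_Icc.mp ht).1 (Finset.mem_Icc.mp ht).2
    linarith
  rw [heq, Real.log_div (ne_of_gt hpos) (ne_of_gt ha0)]
  exact h
end

section
/- Let v_t satisfy v_t = (1 - 1/T) v_{t-1} + (1/T) g_t² with v_0 = v > 0, where T ≥ 2 is an integer and 1 ≤ t ≤ T. Then v_t ≥ (1/(4T)) (v T + ∑_{s=1}^{t} g_s²). -/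
lemma aux_exp_le (T : ℕ) (hT : 2 ≤ T) :
    Real.exp (-(Real.log 4) / T) ≤ 1 - 1 / (T : ℝ) := by
  have hT0 : (0:ℝ) < T := by positivity
  set θ : ℝ := 2 / T with hθ
  have hθ0 : 0 ≤ θ := by positivity
  have hθ1 : θ ≤ 1 := by
    rw [hθ, div_le_one hT0]
    exact_mod_cast hT
  have hcv := convexOn_exp.2 (Set.mem_univ (0:ℝ))
    (Set.mem_univ (-Real.log 2)) (by linarith : (0:ℝ) ≤ 1 - θ) hθ0 (by ring)
  have h2 : Real.exp (-Real.log 2) = 1/2 := by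
    rw [Real.exp_neg, Real.exp_log (by norm_num : (0:ℝ) < 2)]
    norm_num
  have hlog4 : Real.log 4 = 2 * Real.log 2 := by
    rw [show (4:ℝ) = 2^2 by norm_num, Real.log_pow]
    push_cast; ring
  have harg : (1 - θ) • (0:ℝ) + θ • (-Real.log 2) = -(Real.log 4) / T := by
    simp only [smul_eq_mul, hθ, hlog4]; ring
  rw [harg] at hcv
  simp only [smul_eq_mul, Real.exp_zero, h2] at hcv
  have : (1 - θ) * 1 + θ * (1/2) = 1 - 1/(T:ℝ) := by rw [hθ]; ring
  linarith [hcv, this.symm ▸ hcv]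

lemma aux_pow_ge (T : ℕ) (hT : 2 ≤ T) (t : ℕ) (htT : t ≤ T) :
    (1/4 : ℝ) ≤ (1 - 1 / (T : ℝ)) ^ t := by
  have hT0 : (0:ℝ) < T := by positivity
  have hexp := aux_exp_le T hT
  have hx0 : (0:ℝ) ≤ Real.exp (-(Real.log 4) / T) := (Real.exp_pos _).le
  have h1 : Real.exp (-(Real.log 4) / T) ^ t ≤ (1 - 1/(T:ℝ)) ^ t :=
    pow_le_pow_left₀ hx0 hexp t
  have h2 : Real.exp (-(Real.log 4) / T) ^ t = Real.exp (-(t * Real.log 4) / T) := by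
    rw [← Real.exp_nat_mul]; ring_nf
  have h3 : Real.exp (-Real.log 4) ≤ Real.exp (-(t * Real.log 4) / T) := by
    apply Real.exp_le_exp.2
    rw [neg_div, neg_le_neg_iff, div_le_iff₀ hT0]
    have hlog : 0 ≤ Real.log 4 := Real.log_nonneg (by norm_num)
    have htT' : (t:ℝ) ≤ T := by exact_mod_cast htT
    nlinarith
  have h4 : Real.exp (-Real.log 4) = 1/4 := by
    rw [Real.exp_neg, Real.exp_log (by norm_num : (0:ℝ) < 4)]; norm_num
  linarith [h1, h2 ▸ h1]

theorem stmt_3 (T : ℕ) (hT : 2 ≤ T) (v₀ : ℝ) (hv : 0 < v₀)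
    (g : ℕ → ℝ) (v : ℕ → ℝ) (h0 : v 0 = v₀)
    (hrec : ∀ t, 1 ≤ t → t ≤ T →
      v t = (1 - 1 / (T : ℝ)) * v (t - 1) + (1 / (T : ℝ)) * (g t) ^ 2)
    (t : ℕ) (ht1 : 1 ≤ t) (htT : t ≤ T) :
    v t ≥ (1 / (4 * (T : ℝ))) * (v₀ * T + ∑ s ∈ Finset.Icc 1 t, (g s) ^ 2) := by
  have hT0 : (0:ℝ) < T := by positivity
  have hle1 : 1 - 1/(T:ℝ) ≤ 1 := by
    have : (0:ℝ) < 1/T := by positivity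
    linarith
  have hge0 : (0:ℝ) ≤ 1 - 1/(T:ℝ) := by
    have : (1:ℝ)/T ≤ 1/2 := by
      rw [div_le_div_iff₀ hT0 (by norm_num)]
      have : (2:ℝ) ≤ T := by exact_mod_cast hT
      linarith
    linarith
  -- key invariant
  have key : ∀ t, t ≤ T →
      v t ≥ (1 - 1/(T:ℝ))^t * (v₀ + (1/(T:ℝ)) * ∑ s ∈ Finset.Icc 1 t, (g s)^2) := by
    intro t
    induction t with
    | zero => intro _; simp [h0]
    | succ n ih =>
      intro hn1
      have hnT : n ≤ T := Nat.le_of_succ_le hn1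
      have hvn := ih hnT
      have hrn := hrec (n+1) (Nat.le_add_left 1 n) hn1
      simp only [Nat.add_sub_cancel] at hrn
      rw [Finset.sum_Icc_succ_top (Nat.le_add_left 1 n)] at *
      set S := ∑ s ∈ Finset.Icc 1 n, (g s)^2 with hS
      set p := (1 - 1/(T:ℝ))^n with hp
      have hp0 : 0 ≤ p := pow_nonneg hge0 n
      have hp1 : p * (1 - 1/(T:ℝ)) ≤ 1 := by
        calc p * (1 - 1/(T:ℝ)) ≤ 1 * 1 := by
              apply mul_le_mul (pow_le_one₀ hge0 hle1) hle1 hge0 zero_le_one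
          _ = 1 := by ring
      have hg : (0:ℝ) ≤ (g (n+1))^2 := sq_nonneg _
      have hTpos : (0:ℝ) < 1/T := by positivity
      have hps : (1 - 1/(T:ℝ))^(n+1) = p * (1 - 1/(T:ℝ)) := pow_succ _ _
      rw [hrn, hps]
      nlinarith [mul_le_mul_of_nonneg_left hvn hge0,
        mul_nonneg (by linarith : (0:ℝ) ≤ 1 - p*(1 - 1/(T:ℝ)))
          (mul_nonneg hTpos.le hg)]
  have hkey := key t htT
  have hpow := aux_pow_ge T hT t htT
  set S := ∑ s ∈ Finset.Icc 1 t, (g s)^2 with hS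
  have hS0 : 0 ≤ S := Finset.sum_nonneg fun s _ => sq_nonneg _
  have hbase : 0 ≤ v₀ + (1/(T:ℝ)) * S := by positivity
  have h1 : (1/4:ℝ) * (v₀ + (1/(T:ℝ)) * S) ≤ (1 - 1/(T:ℝ))^t * (v₀ + (1/(T:ℝ)) * S) :=
    mul_le_mul_of_nonneg_right hpow hbase
  have h2 : (1 / (4 * (T:ℝ))) * (v₀ * T + S) = (1/4:ℝ) * (v₀ + (1/(T:ℝ)) * S) := by
    field_simp
  linarith [hkey]
end

section
/- Let T ≥ 2 be an integer, v > 0, η > 0, d ≥ 1 an integer, and let g_1,...,g_T ∈ ℝ^d. Define v_{t,i} by v_{t,i} = (1-1/T)v_{t-1,i} + (1/T)g_{t,i}² with v_{0,i} = v, and γ_{t,i} = (η/√T)/(√(v_{t,i}) + ε) for ε > 0. Then ∑_{t=1}^{T} ∑_{i=1}^{d} γ_{t,i}² g_{t,i}² ≤ 4 η² d log(1 + S_T/(v d T)), where S_T = v d + ∑_{t=1}^{T} ‖g_t‖². -/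
open Finset

-- (1 - 1/T)^T ≥ 1/4 for T ≥ 2
lemma aux_pow_quarter (T : ℕ) (hT : 2 ≤ T) : (1/4 : ℝ) ≤ (1 - 1/(T:ℝ))^T := by
  have hT0 : (0:ℝ) < T := by positivity
  have h2 : (2:ℝ) ≤ T := by exact_mod_cast hT
  -- exp(-(log 4)/T) ≤ 1 - 1/T by convexity of exp
  have key : Real.exp (-(Real.log 4) / T) ≤ 1 - 1/(T:ℝ) := by
    have hconv := convexOn_exp
    have hmem : (-(Real.log 4)/T) = (1 - 2/(T:ℝ)) * 0 + (2/(T:ℝ)) * (-(Real.log 4)/2) := by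
      field_simp
      ring
    have h1 : (0:ℝ) ≤ 1 - 2/(T:ℝ) := by
      rw [sub_nonneg]; rw [div_le_one hT0]; linarith
    have h2' : (0:ℝ) ≤ 2/(T:ℝ) := by positivity
    have := hconv.2 (Set.mem_univ 0) (Set.mem_univ (-(Real.log 4)/2)) h1 h2' (by ring)
    rw [smul_eq_mul, smul_eq_mul, smul_eq_mul, smul_eq_mul] at this
    rw [hmem]
    refine this.trans_eq ?_
    have hl42 : Real.log 4 / 2 = Real.log 2 := by
      rw [show (4:ℝ) = 2^2 by norm_num, Real.log_pow]; push_cast; ring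
    have he : Real.exp (-(Real.log 4)/2) = 1/2 := by
      rw [show -(Real.log 4)/2 = -(Real.log 4 / 2) by ring, Real.exp_neg, hl42,
        Real.exp_log (by norm_num)]
      norm_num
    rw [he, Real.exp_zero]
    ring
  have hexp : Real.exp (-(Real.log 4)/T) ^ T = 1/4 := by
    rw [← Real.exp_nat_mul]
    rw [show (T:ℝ) * (-(Real.log 4)/T) = -(Real.log 4) by field_simp]
    rw [Real.exp_neg, Real.exp_log (by norm_num)]
    norm_num
  calc (1/4:ℝ) = Real.exp (-(Real.log 4)/T) ^ T := hexp.symm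
    _ ≤ (1 - 1/(T:ℝ))^T := by
        apply pow_le_pow_left₀ (Real.exp_pos _).le key

-- telescoping log lemma
lemma aux_telescope (f : ℕ → ℝ) (c : ℝ) (hc : 0 < c) (hf : ∀ s, 0 ≤ f s) (n : ℕ) :
    ∑ t ∈ Icc 1 n, f t / (c + ∑ s ∈ Icc 1 t, f s)
      ≤ Real.log (c + ∑ s ∈ Icc 1 n, f s) - Real.log c := by
  induction n with
  | zero => simp
  | succ n ih =>
    rw [Finset.sum_Icc_succ_top (Nat.one_le_iff_ne_zero.2 (Nat.succ_ne_zero n)),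
        Finset.sum_Icc_succ_top (Nat.one_le_iff_ne_zero.2 (Nat.succ_ne_zero n))]
    have hSn : (0:ℝ) < c + ∑ s ∈ Icc 1 n, f s := by
      have : (0:ℝ) ≤ ∑ s ∈ Icc 1 n, f s := Finset.sum_nonneg fun s _ => hf s
      linarith
    have hSn1 : (0:ℝ) < c + (∑ s ∈ Icc 1 n, f s + f (n+1)) := by
      have := hf (n+1); linarith
    have step : f (n+1) / (c + (∑ s ∈ Icc 1 n, f s + f (n+1)))
        ≤ Real.log (c + (∑ s ∈ Icc 1 n, f s + f (n+1))) - Real.log (c + ∑ s ∈ Icc 1 n, f s) := by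
      set A := c + ∑ s ∈ Icc 1 n, f s
      set B := c + (∑ s ∈ Icc 1 n, f s + f (n+1))
      have hAB : A ≤ B := by have := hf (n+1); simp only [A, B]; linarith
      have hlog : Real.log (A/B) ≤ A/B - 1 := Real.log_le_sub_one_of_pos (by positivity)
      rw [Real.log_div (by positivity) (by positivity)] at hlog
      have : 1 - A/B ≤ Real.log B - Real.log A := by linarith
      refine le_trans (le_of_eq ?_) this
      field_simp [A, B]
      simp only [A, B]; ring
    linarith [ih]

lemma aux_jensen (d : ℕ) (hd : 1 ≤ d) (x : Fin d → ℝ) (hx : ∀ i, 0 < x i) :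
    ∑ i, Real.log (x i) ≤ d * Real.log ((∑ i, x i) / d) := by
  have hd0 : (0:ℝ) < d := by positivity
  have h := (strictConcaveOn_log_Ioi.concaveOn).le_map_sum (t := Finset.univ)
    (w := fun _ : Fin d => 1/(d:ℝ)) (p := x)
    (fun i _ => by positivity)
    (by simp [Finset.card_univ]; field_simp)
    (fun i _ => hx i)
  simp only [smul_eq_mul] at h
  rw [← Finset.mul_sum] at h
  rw [← Finset.mul_sum] at h
  have := mul_le_mul_of_nonneg_left h hd0.le
  calc ∑ i, Real.log (x i) = (d:ℝ) * (1/(d:ℝ) * ∑ i, Real.log (x i)) := by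
        field_simp
    _ ≤ (d:ℝ) * Real.log (1/(d:ℝ) * ∑ i, x i) := this
    _ = d * Real.log ((∑ i, x i)/d) := by rw [one_div, inv_mul_eq_div]

theorem stmt_4 (T d : ℕ) (hT : 2 ≤ T) (hd : 1 ≤ d)
    (v₀ η ε : ℝ) (hv : 0 < v₀) (hη : 0 < η) (hε : 0 < ε)
    (g : ℕ → Fin d → ℝ) (v : ℕ → Fin d → ℝ)
    (h0 : ∀ i, v 0 i = v₀)
    (hrec : ∀ t, 1 ≤ t → t ≤ T → ∀ i,
      v t i = (1 - 1 / (T : ℝ)) * v (t - 1) i + (1 / (T : ℝ)) * (g t i) ^ 2)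
    (γ : ℕ → Fin d → ℝ)
    (hγ : ∀ t i, γ t i = (η / Real.sqrt T) / (Real.sqrt (v t i) + ε))
    (S : ℝ) (hS : S = v₀ * d + ∑ t ∈ Finset.Icc 1 T, ∑ i, (g t i) ^ 2) :
    ∑ t ∈ Finset.Icc 1 T, ∑ i, (γ t i) ^ 2 * (g t i) ^ 2
      ≤ 4 * η ^ 2 * d * Real.log (1 + S / (v₀ * d * T)) := by
  have hT0 : (0:ℝ) < T := by positivity
  have hT2 : (2:ℝ) ≤ T := by exact_mod_cast hT
  set c : ℝ := 1 - 1/(T:ℝ) with hc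
  have hc0 : 0 < c := by rw [hc]; rw [sub_pos]; rw [div_lt_one hT0]; linarith
  have hc1 : c ≤ 1 := by rw [hc]; have : 0 < 1/(T:ℝ) := by positivity
                         linarith
  -- A t i := T*v₀ + partial sum
  set A : ℕ → Fin d → ℝ := fun t i => (T:ℝ)*v₀ + ∑ s ∈ Finset.Icc 1 t, (g s i)^2 with hA
  have hApos : ∀ t i, 0 < A t i := fun t i => by
    have : (0:ℝ) ≤ ∑ s ∈ Finset.Icc 1 t, (g s i)^2 :=
      Finset.sum_nonneg fun s _ => sq_nonneg _
    have : (0:ℝ) < (T:ℝ)*v₀ := by positivity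
    simp only [hA]; linarith [Finset.sum_nonneg (fun s (_ : s ∈ Finset.Icc 1 t) => sq_nonneg (g s i))]
  -- Step 1: lower bound by induction
  have hlow : ∀ t, t ≤ T → ∀ i, c^t * ((1/(T:ℝ)) * A t i) ≤ v t i := by
    intro t
    induction t with
    | zero =>
      intro _ i
      simp only [hA, Finset.Icc_eq_empty (by norm_num : ¬(1:ℕ) ≤ 0), Finset.sum_empty,
        pow_zero, one_mul, h0 i, add_zero]
      rw [one_div, inv_mul_cancel_left₀ (ne_of_gt hT0)]
    | succ n ih =>
      intro hn i
      have hn' : n ≤ T := Nat.le_of_succ_le hn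
      have hrw := hrec (n+1) (Nat.le_add_left 1 n) hn i
      simp only [Nat.add_sub_cancel] at hrw
      rw [hrw]
      have h1 : c^(n+1) * ((1/(T:ℝ)) * A n i) ≤ c * v n i := by
        rw [pow_succ, mul_comm (c^n) c, mul_assoc]
        exact mul_le_mul_of_nonneg_left (ih hn' i) hc0.le
      have hsum : A (n+1) i = A n i + (g (n+1) i)^2 := by
        simp only [hA]
        rw [Finset.sum_Icc_succ_top (Nat.one_le_iff_ne_zero.2 (Nat.succ_ne_zero n))]
        ring
      have h2 : c^(n+1) * ((1/(T:ℝ)) * (g (n+1) i)^2) ≤ (1/(T:ℝ)) * (g (n+1) i)^2 := by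
        have hcp : c^(n+1) ≤ 1 := pow_le_one₀ hc0.le hc1
        have : (0:ℝ) ≤ (1/(T:ℝ)) * (g (n+1) i)^2 := by positivity
        nlinarith
      calc c^(n+1) * ((1/(T:ℝ)) * A (n+1) i)
          = c^(n+1) * ((1/(T:ℝ)) * A n i) + c^(n+1) * ((1/(T:ℝ)) * (g (n+1) i)^2) := by
            rw [hsum]; ring
        _ ≤ c * v n i + (1/(T:ℝ)) * (g (n+1) i)^2 := add_le_add h1 h2
  -- Step 2: quarter bound
  have hq : ∀ t, t ≤ T → ∀ i, (1/(4*(T:ℝ))) * A t i ≤ v t i := by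
    intro t ht i
    refine le_trans ?_ (hlow t ht i)
    have hct : c^T ≤ c^t := pow_le_pow_of_le_one hc0.le hc1 ht
    have h4 : (1/4 : ℝ) ≤ c^T := aux_pow_quarter T hT
    have hAn := (hApos t i).le
    have h14 : (1/4:ℝ) ≤ c^t := h4.trans hct
    calc (1/(4*(T:ℝ))) * A t i = (1/4) * ((1/(T:ℝ)) * A t i) := by ring
      _ ≤ c^t * ((1/(T:ℝ)) * A t i) :=
          mul_le_mul_of_nonneg_right h14 (by positivity)
  have hvpos : ∀ t, t ≤ T → ∀ i, 0 < v t i := fun t ht i =>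
    lt_of_lt_of_le (by positivity) (hq t ht i)
  -- Step 3: termwise bound
  have hterm : ∀ t ∈ Finset.Icc 1 T, ∀ i,
      (γ t i)^2 * (g t i)^2 ≤ 4 * η^2 * ((g t i)^2 / A t i) := by
    intro t ht i
    rw [Finset.mem_Icc] at ht
    have htT := ht.2
    have hvp := hvpos t htT i
    have hγ2 : (γ t i)^2 ≤ η^2 / ((T:ℝ) * v t i) := by
      rw [hγ]
      rw [div_pow, div_pow]
      rw [Real.sq_sqrt hT0.le]
      have hden : v t i ≤ (Real.sqrt (v t i) + ε)^2 := by
        have hs : Real.sqrt (v t i) ^ 2 = v t i := Real.sq_sqrt hvp.le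
        nlinarith [Real.sqrt_nonneg (v t i), hε]
      rw [div_div]
      apply div_le_div_of_nonneg_left (by positivity) (by positivity)
      calc (T:ℝ) * v t i ≤ (T:ℝ) * (Real.sqrt (v t i) + ε)^2 :=
            mul_le_mul_of_nonneg_left hden hT0.le
        _ = (T:ℝ) * (Real.sqrt (v t i) + ε)^2 := rfl
    have h1 : (γ t i)^2 * (g t i)^2 ≤ (η^2 / ((T:ℝ) * v t i)) * (g t i)^2 :=
      mul_le_mul_of_nonneg_right hγ2 (sq_nonneg _)
    refine h1.trans ?_
    -- η²/(T v) ≤ 4η²/A since v ≥ A/(4T)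
    have hvA := hq t htT i
    have hAp := hApos t i
    rw [div_mul_eq_mul_div, mul_div_assoc']
    rw [div_le_div_iff₀ (by positivity) hAp]
    have : A t i ≤ 4 * (T:ℝ) * v t i := by
      rw [div_mul_eq_mul_div, one_mul] at hvA
      rw [div_le_iff₀ (by positivity)] at hvA
      linarith
    calc η^2 * (g t i)^2 * A t i ≤ η^2 * (g t i)^2 * (4*(T:ℝ)*v t i) :=
          mul_le_mul_of_nonneg_left this (by positivity)
      _ = 4 * η^2 * (g t i)^2 * ((T:ℝ) * v t i) := by ring
  -- Step 4: sum up
  have hsum1 : ∑ t ∈ Finset.Icc 1 T, ∑ i, (γ t i)^2 * (g t i)^2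
      ≤ 4 * η^2 * ∑ i, ∑ t ∈ Finset.Icc 1 T, (g t i)^2 / A t i := by
    rw [Finset.mul_sum]
    rw [Finset.sum_comm]
    refine Finset.sum_le_sum fun i _ => ?_
    rw [Finset.mul_sum]
    exact Finset.sum_le_sum fun t ht => hterm t ht i
  have htel : ∀ i : Fin d, ∑ t ∈ Finset.Icc 1 T, (g t i)^2 / A t i
      ≤ Real.log (A T i) - Real.log ((T:ℝ)*v₀) := by
    intro i
    have := aux_telescope (fun s => (g s i)^2) ((T:ℝ)*v₀) (by positivity)
      (fun s => sq_nonneg _) T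
    exact this
  set G : ℝ := ∑ t ∈ Finset.Icc 1 T, ∑ i, (g t i)^2 with hG
  have hG0 : 0 ≤ G := Finset.sum_nonneg fun t _ =>
    Finset.sum_nonneg fun i _ => sq_nonneg _
  have hsumA : ∑ i, A T i = (d:ℝ)*(T:ℝ)*v₀ + G := by
    simp only [hA, Finset.sum_add_distrib, Finset.sum_const, Finset.card_univ,
      Fintype.card_fin, nsmul_eq_mul, hG]
    rw [Finset.sum_comm]
    ring
  have hd0 : (0:ℝ) < d := by positivity
  have hjen : ∑ i, Real.log (A T i) ≤ (d:ℝ) * Real.log (((d:ℝ)*(T:ℝ)*v₀ + G)/d) := by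
    have := aux_jensen d hd (fun i => A T i) (fun i => hApos T i)
    rwa [hsumA] at this
  have hsum2 : ∑ i, (Real.log (A T i) - Real.log ((T:ℝ)*v₀))
      ≤ (d:ℝ) * Real.log (((d:ℝ)*(T:ℝ)*v₀ + G)/((d:ℝ)*(T:ℝ)*v₀)) := by
    rw [Finset.sum_sub_distrib, Finset.sum_const, Finset.card_univ, Fintype.card_fin,
      nsmul_eq_mul]
    have harg : Real.log (((d:ℝ)*(T:ℝ)*v₀ + G)/((d:ℝ)*(T:ℝ)*v₀))
        = Real.log (((d:ℝ)*(T:ℝ)*v₀ + G)/d) - Real.log ((T:ℝ)*v₀) := by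
      rw [show ((d:ℝ)*(T:ℝ)*v₀ + G)/((d:ℝ)*(T:ℝ)*v₀)
            = (((d:ℝ)*(T:ℝ)*v₀ + G)/d)/((T:ℝ)*v₀) from by ring,
          Real.log_div (by positivity) (by positivity)]
    rw [harg, mul_sub]
    linarith [hjen]
  have hfinal : Real.log (((d:ℝ)*(T:ℝ)*v₀ + G)/((d:ℝ)*(T:ℝ)*v₀))
      ≤ Real.log (1 + S / (v₀ * d * T)) := by
    apply Real.log_le_log (by positivity)
    rw [hS]
    have heq : 1 + (v₀ * (d:ℝ) + G) / (v₀ * (d:ℝ) * (T:ℝ))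
        = (v₀*(d:ℝ)*(T:ℝ) + (v₀*(d:ℝ) + G)) / (v₀*(d:ℝ)*(T:ℝ)) := by
      field_simp
    rw [heq, div_le_div_iff₀ (by positivity) (by positivity)]
    nlinarith [mul_nonneg (mul_nonneg hv.le hd0.le)
      (by positivity : (0:ℝ) ≤ (d:ℝ)*(T:ℝ)*v₀), hG0]
  calc ∑ t ∈ Finset.Icc 1 T, ∑ i, (γ t i)^2 * (g t i)^2
      ≤ 4 * η^2 * ∑ i, ∑ t ∈ Finset.Icc 1 T, (g t i)^2 / A t i := hsum1
    _ ≤ 4 * η^2 * ∑ i, (Real.log (A T i) - Real.log ((T:ℝ)*v₀)) := by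
        apply mul_le_mul_of_nonneg_left _ (by positivity)
        exact Finset.sum_le_sum fun i _ => htel i
    _ ≤ 4 * η^2 * ((d:ℝ) * Real.log (((d:ℝ)*(T:ℝ)*v₀ + G)/((d:ℝ)*(T:ℝ)*v₀))) := by
        apply mul_le_mul_of_nonneg_left hsum2 (by positivity)
    _ ≤ 4 * η^2 * ((d:ℝ) * Real.log (1 + S / (v₀ * d * T))) := by
        apply mul_le_mul_of_nonneg_left _ (by positivity)
        exact mul_le_mul_of_nonneg_left hfinal hd0.le
    _ = 4 * η ^ 2 * d * Real.log (1 + S / (v₀ * d * T)) := by ring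
end

section
/- Let β₁ ∈ [0,1), let γ_t, g_t ∈ ℝ^d (with γ_{t,i} > 0), and suppose γ_{t,i} ≤ 2 γ_{k,i} for all 1 ≤ k ≤ t and all coordinates i. Let m_t = (1-β₁) ∑_{k=1}^{t} β₁^{t-k} g_k. Then for every N ≥ 1, ∑_{t=1}^{N} ‖γ_t ⊙ m_t‖² ≤ 4 ∑_{t=1}^{N} ‖γ_t ⊙ g_t‖², where ⊙ denotes the coordinatewise (Hadamard) product. -/
private lemma geom_range_le (β : ℝ) (h0 : 0 ≤ β) (h1 : β < 1) (n : ℕ) :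
    ∑ j ∈ Finset.range n, β ^ j ≤ 1 / (1 - β) := by
  have hβ : β ≠ 1 := ne_of_lt h1
  rw [geom_sum_eq hβ]
  have hpos : 0 < 1 - β := by linarith
  have hne : β - 1 ≠ 0 := by linarith
  have hne' : (1:ℝ) - β ≠ 0 := ne_of_gt hpos
  have heq : (β ^ n - 1) / (β - 1) = (1 - β ^ n) / (1 - β) := by
    field_simp
    ring
  rw [heq]
  gcongr
  have hβn : 0 ≤ β ^ n := pow_nonneg h0 n
  linarith

private lemma geom_inj_le (β : ℝ) (h0 : 0 ≤ β) (h1 : β < 1) (s : Finset ℕ) (e : ℕ → ℕ)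
    (hinj : ∀ x ∈ s, ∀ y ∈ s, e x = e y → x = y) :
    ∑ k ∈ s, β ^ (e k) ≤ 1 / (1 - β) := by
  rw [← Finset.sum_image (f := fun j => β ^ j) hinj]
  set M := (s.image e).sup id + 1 with hM
  have hsub : s.image e ⊆ Finset.range M := by
    intro j hj
    simp only [Finset.mem_range, hM]
    exact Nat.lt_succ_of_le (Finset.le_sup (f := id) hj)
  calc ∑ j ∈ s.image e, β ^ j ≤ ∑ j ∈ Finset.range M, β ^ j :=
        Finset.sum_le_sum_of_subset_of_nonneg hsub (fun j _ _ => pow_nonneg h0 j)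
    _ ≤ 1 / (1 - β) := geom_range_le β h0 h1 M

theorem stmt_6 (d N : ℕ) (hN : 1 ≤ N) (β₁ : ℝ) (h0 : 0 ≤ β₁) (h1 : β₁ < 1)
    (γ g : ℕ → Fin d → ℝ)
    (hγpos : ∀ t i, 0 < γ t i)
    (hcomp : ∀ t k, 1 ≤ k → k ≤ t → ∀ i, γ t i ≤ 2 * γ k i)
    (m : ℕ → Fin d → ℝ)
    (hm : ∀ t i, m t i = (1 - β₁) * ∑ k ∈ Finset.Icc 1 t, β₁ ^ (t - k) * g k i) :
    ∑ t ∈ Finset.Icc 1 N, ∑ i, (γ t i * m t i) ^ 2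
      ≤ 4 * ∑ t ∈ Finset.Icc 1 N, ∑ i, (γ t i * g t i) ^ 2 := by
  have hpos : 0 < 1 - β₁ := by linarith
  -- pointwise bound
  have key : ∀ t ∈ Finset.Icc 1 N, ∀ i,
      (γ t i * m t i) ^ 2
        ≤ 4 * (1 - β₁) * ∑ k ∈ Finset.Icc 1 t, β₁ ^ (t - k) * (γ k i * g k i) ^ 2 := by
    intro t ht i
    rw [hm]
    have hrw : γ t i * ((1 - β₁) * ∑ k ∈ Finset.Icc 1 t, β₁ ^ (t - k) * g k i)
        = (1 - β₁) * ∑ k ∈ Finset.Icc 1 t, β₁ ^ (t - k) * (γ t i * g k i) := by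
      rw [mul_left_comm]
      congr 1
      rw [Finset.mul_sum]
      exact Finset.sum_congr rfl fun k _ => by ring
    rw [hrw, mul_pow]
    have hCS : (∑ k ∈ Finset.Icc 1 t, β₁ ^ (t - k) * (γ t i * g k i)) ^ 2
        ≤ (∑ k ∈ Finset.Icc 1 t, β₁ ^ (t - k))
          * ∑ k ∈ Finset.Icc 1 t, β₁ ^ (t - k) * (γ t i * g k i) ^ 2 := by
      have := Finset.sum_mul_sq_le_sq_mul_sq (Finset.Icc 1 t)
        (fun k => Real.sqrt (β₁ ^ (t - k)))
        (fun k => Real.sqrt (β₁ ^ (t - k)) * (γ t i * g k i))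
      have hsq : ∀ k, Real.sqrt (β₁ ^ (t - k)) ^ 2 = β₁ ^ (t - k) := fun k =>
        Real.sq_sqrt (pow_nonneg h0 _)
      calc (∑ k ∈ Finset.Icc 1 t, β₁ ^ (t - k) * (γ t i * g k i)) ^ 2
          = (∑ k ∈ Finset.Icc 1 t,
              Real.sqrt (β₁ ^ (t - k)) * (Real.sqrt (β₁ ^ (t - k)) * (γ t i * g k i))) ^ 2 := by
            congr 1; apply Finset.sum_congr rfl; intro k _
            conv_rhs => rw [← mul_assoc, Real.mul_self_sqrt (pow_nonneg h0 _)]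
        _ ≤ (∑ k ∈ Finset.Icc 1 t, Real.sqrt (β₁ ^ (t - k)) ^ 2)
              * ∑ k ∈ Finset.Icc 1 t, (Real.sqrt (β₁ ^ (t - k)) * (γ t i * g k i)) ^ 2 := this
        _ = (∑ k ∈ Finset.Icc 1 t, β₁ ^ (t - k))
              * ∑ k ∈ Finset.Icc 1 t, β₁ ^ (t - k) * (γ t i * g k i) ^ 2 := by
            congr 1
            · exact Finset.sum_congr rfl fun k _ => hsq k
            · apply Finset.sum_congr rfl; intro k _; rw [mul_pow, hsq]
    have hgeom : (∑ k ∈ Finset.Icc 1 t, β₁ ^ (t - k)) ≤ 1 / (1 - β₁) := by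
      apply geom_inj_le β₁ h0 h1 _ (fun k => t - k)
      intro x hx y hy hxy
      simp only [Finset.mem_Icc] at hx hy
      omega
    have hterm : ∀ k ∈ Finset.Icc 1 t,
        β₁ ^ (t - k) * (γ t i * g k i) ^ 2 ≤ β₁ ^ (t - k) * (4 * (γ k i * g k i) ^ 2) := by
      intro k hk
      simp only [Finset.mem_Icc] at hk
      apply mul_le_mul_of_nonneg_left _ (pow_nonneg h0 _)
      have h2 := hcomp t k hk.1 hk.2 i
      have hγt := (hγpos t i).le
      have hγk := (hγpos k i).le
      have h3 : γ t i ^ 2 ≤ 4 * γ k i ^ 2 := by nlinarith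
      calc (γ t i * g k i) ^ 2 = γ t i ^ 2 * g k i ^ 2 := by ring
        _ ≤ 4 * γ k i ^ 2 * g k i ^ 2 := by nlinarith [sq_nonneg (g k i)]
        _ = 4 * (γ k i * g k i) ^ 2 := by ring
    have hsum2 : ∑ k ∈ Finset.Icc 1 t, β₁ ^ (t - k) * (γ t i * g k i) ^ 2
        ≤ 4 * ∑ k ∈ Finset.Icc 1 t, β₁ ^ (t - k) * (γ k i * g k i) ^ 2 := by
      rw [Finset.mul_sum]
      apply Finset.sum_le_sum
      intro k hk
      exact le_of_le_of_eq (hterm k hk) (by ring)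
    have hnn : 0 ≤ ∑ k ∈ Finset.Icc 1 t, β₁ ^ (t - k) * (γ t i * g k i) ^ 2 :=
      Finset.sum_nonneg fun k _ => mul_nonneg (pow_nonneg h0 _) (sq_nonneg _)
    have hnn4 : 0 ≤ ∑ k ∈ Finset.Icc 1 t, β₁ ^ (t - k) * (γ k i * g k i) ^ 2 :=
      Finset.sum_nonneg fun k _ => mul_nonneg (pow_nonneg h0 _) (sq_nonneg _)
    calc (1 - β₁) ^ 2 * (∑ k ∈ Finset.Icc 1 t, β₁ ^ (t - k) * (γ t i * g k i)) ^ 2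
        ≤ (1 - β₁) ^ 2 * ((∑ k ∈ Finset.Icc 1 t, β₁ ^ (t - k))
            * ∑ k ∈ Finset.Icc 1 t, β₁ ^ (t - k) * (γ t i * g k i) ^ 2) :=
          mul_le_mul_of_nonneg_left hCS (sq_nonneg _)
      _ ≤ (1 - β₁) ^ 2 * ((1 / (1 - β₁))
            * ∑ k ∈ Finset.Icc 1 t, β₁ ^ (t - k) * (γ t i * g k i) ^ 2) := by
          apply mul_le_mul_of_nonneg_left _ (sq_nonneg _)
          exact mul_le_mul_of_nonneg_right hgeom hnn
      _ ≤ (1 - β₁) ^ 2 * ((1 / (1 - β₁))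
            * (4 * ∑ k ∈ Finset.Icc 1 t, β₁ ^ (t - k) * (γ k i * g k i) ^ 2)) := by
          apply mul_le_mul_of_nonneg_left _ (sq_nonneg _)
          exact mul_le_mul_of_nonneg_left hsum2 (by positivity)
      _ = 4 * (1 - β₁) * ∑ k ∈ Finset.Icc 1 t, β₁ ^ (t - k) * (γ k i * g k i) ^ 2 := by
          field_simp
  -- sum the pointwise bounds and exchange summation
  have step1 : ∑ t ∈ Finset.Icc 1 N, ∑ i, (γ t i * m t i) ^ 2
      ≤ 4 * (1 - β₁) * ∑ t ∈ Finset.Icc 1 N, ∑ k ∈ Finset.Icc 1 t,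
          β₁ ^ (t - k) * ∑ i, (γ k i * g k i) ^ 2 := by
    rw [Finset.mul_sum]
    apply Finset.sum_le_sum
    intro t ht
    calc ∑ i, (γ t i * m t i) ^ 2
        ≤ ∑ i, 4 * (1 - β₁) * ∑ k ∈ Finset.Icc 1 t, β₁ ^ (t - k) * (γ k i * g k i) ^ 2 :=
          Finset.sum_le_sum fun i _ => key t ht i
      _ = 4 * (1 - β₁) * ∑ k ∈ Finset.Icc 1 t, β₁ ^ (t - k) * ∑ i, (γ k i * g k i) ^ 2 := by
          rw [← Finset.mul_sum, Finset.sum_comm]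
          congr 1
          apply Finset.sum_congr rfl
          intro k _
          rw [Finset.mul_sum]
  have hswap : ∑ t ∈ Finset.Icc 1 N, ∑ k ∈ Finset.Icc 1 t,
        β₁ ^ (t - k) * ∑ i, (γ k i * g k i) ^ 2
      = ∑ k ∈ Finset.Icc 1 N, ∑ t ∈ Finset.Icc k N,
        β₁ ^ (t - k) * ∑ i, (γ k i * g k i) ^ 2 := by
    apply Finset.sum_comm'
    intro t k
    simp only [Finset.mem_Icc]
    omega
  have step2 : ∀ k ∈ Finset.Icc 1 N,
      ∑ t ∈ Finset.Icc k N, β₁ ^ (t - k) * ∑ i, (γ k i * g k i) ^ 2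
        ≤ (1 / (1 - β₁)) * ∑ i, (γ k i * g k i) ^ 2 := by
    intro k hk
    rw [← Finset.sum_mul]
    apply mul_le_mul_of_nonneg_right _ (Finset.sum_nonneg fun i _ => sq_nonneg _)
    apply geom_inj_le β₁ h0 h1 _ (fun t => t - k)
    intro x hx y hy hxy
    simp only [Finset.mem_Icc] at hx hy
    omega
  calc ∑ t ∈ Finset.Icc 1 N, ∑ i, (γ t i * m t i) ^ 2
      ≤ 4 * (1 - β₁) * ∑ k ∈ Finset.Icc 1 N, ∑ t ∈ Finset.Icc k N,
          β₁ ^ (t - k) * ∑ i, (γ k i * g k i) ^ 2 := by rw [← hswap]; exact step1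
    _ ≤ 4 * (1 - β₁) * ∑ k ∈ Finset.Icc 1 N,
          (1 / (1 - β₁)) * ∑ i, (γ k i * g k i) ^ 2 := by
        apply mul_le_mul_of_nonneg_left _ (by positivity)
        exact Finset.sum_le_sum step2
    _ = 4 * ∑ t ∈ Finset.Icc 1 N, ∑ i, (γ t i * g t i) ^ 2 := by
        rw [← Finset.mul_sum]
        field_simp
end

section
/- Let β₂ ∈ (0,1), v > 0, and let g_1,...,g_T ∈ ℝ be arbitrary reals. Define v_t = β₂ v_{t-1} + (1-β₂) g_t² with v_0 = v. Then ∑_{t=1}^{T} g_t²/v_t ≤ (1/(1-β₂)) log(1 + ((1-β₂)/v) ∑_{t=1}^{T} β₂^{-t} g_t²). -/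
theorem stmt_10 (T : ℕ) (β₂ v₀ : ℝ) (hβ0 : 0 < β₂) (hβ1 : β₂ < 1) (hv : 0 < v₀)
    (g : ℕ → ℝ) (v : ℕ → ℝ) (h0 : v 0 = v₀)
    (hrec : ∀ t, 1 ≤ t → v t = β₂ * v (t - 1) + (1 - β₂) * (g t) ^ 2) :
    ∑ t ∈ Finset.Icc 1 T, (g t) ^ 2 / v t
      ≤ (1 / (1 - β₂)) *
        Real.log (1 + ((1 - β₂) / v₀) * ∑ t ∈ Finset.Icc 1 T, β₂ ^ (-(t : ℤ)) * (g t) ^ 2) := by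
  have hβ2 : (0:ℝ) < 1 - β₂ := by linarith
  have hβne : β₂ ≠ 0 := ne_of_gt hβ0
  set S : ℕ → ℝ := fun t => v₀ + (1 - β₂) * ∑ s ∈ Finset.Icc 1 t, β₂ ^ (-(s : ℤ)) * (g s) ^ 2
    with hSdef
  have hS0 : S 0 = v₀ := by simp [hSdef]
  have hz : ∀ t : ℕ, β₂ ^ (-(t : ℤ)) = (β₂ ^ t)⁻¹ := by
    intro t; rw [zpow_neg, zpow_natCast]
  have hSsucc : ∀ t : ℕ, S (t + 1) = S t + (1 - β₂) * ((β₂ ^ (t+1))⁻¹ * (g (t+1)) ^ 2) := by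
    intro t
    simp only [hSdef]
    rw [Finset.sum_Icc_succ_top (by omega : 1 ≤ t + 1), hz (t+1)]
    ring
  have hterm_nonneg : ∀ s : ℕ, 0 ≤ β₂ ^ (-(s : ℤ)) * (g s) ^ 2 := fun s =>
    mul_nonneg (le_of_lt (zpow_pos hβ0 _)) (sq_nonneg _)
  have hSpos : ∀ t, 0 < S t := by
    intro t
    have : 0 ≤ ∑ s ∈ Finset.Icc 1 t, β₂ ^ (-(s : ℤ)) * (g s) ^ 2 :=
      Finset.sum_nonneg fun s _ => hterm_nonneg s
    have := mul_nonneg (le_of_lt hβ2) this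
    simp only [hSdef]; linarith
  have hveq : ∀ t, v t = β₂ ^ t * S t := by
    intro t
    induction t with
    | zero => simp [h0, hS0]
    | succ n ih =>
      have hr := hrec (n + 1) (by omega)
      simp only [Nat.add_sub_cancel] at hr
      rw [hr, ih, hSsucc n]
      have hne : β₂ ^ (n+1) ≠ 0 := pow_ne_zero _ hβne
      field_simp
      ring
  have key : ∀ t, 1 ≤ t → (g t) ^ 2 / v t ≤ (1 / (1 - β₂)) * (Real.log (S t) - Real.log (S (t-1))) := by
    intro t ht
    obtain ⟨n, rfl⟩ : ∃ n, t = n + 1 := ⟨t - 1, by omega⟩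
    simp only [Nat.add_sub_cancel]
    have hSn := hSpos n
    have hSn1 := hSpos (n + 1)
    have hpne : β₂ ^ (n+1) ≠ 0 := pow_ne_zero _ hβne
    have hdiff : S (n+1) - S n = (1 - β₂) * ((β₂ ^ (n+1))⁻¹ * (g (n+1)) ^ 2) := by
      rw [hSsucc n]; ring
    have heq : (g (n+1)) ^ 2 / v (n + 1) = (S (n+1) - S n) / ((1 - β₂) * S (n+1)) := by
      rw [hveq, hdiff]
      rw [div_eq_div_iff (by positivity) (by positivity)]
      field_simp
    rw [heq]
    have hratio : 1 - S n / S (n+1) ≤ Real.log (S (n+1)) - Real.log (S n) := by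
      have hx : 0 < S n / S (n+1) := div_pos hSn hSn1
      have := Real.log_le_sub_one_of_pos hx
      rw [Real.log_div (ne_of_gt hSn) (ne_of_gt hSn1)] at this
      linarith
    have h1 : (S (n+1) - S n) / ((1 - β₂) * S (n+1)) =
        (1 / (1 - β₂)) * (1 - S n / S (n+1)) := by
      field_simp
    rw [h1]
    exact mul_le_mul_of_nonneg_left hratio (by positivity)
  have htel : ∀ n : ℕ, ∑ t ∈ Finset.Icc 1 n,
      (Real.log (S t) - Real.log (S (t-1))) = Real.log (S n) - Real.log (S 0) := by
    intro n
    induction n with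
    | zero => simp
    | succ m ih =>
      rw [Finset.sum_Icc_succ_top (by omega : 1 ≤ m + 1), ih]
      simp only [Nat.add_sub_cancel]
      ring
  calc ∑ t ∈ Finset.Icc 1 T, (g t) ^ 2 / v t
      ≤ ∑ t ∈ Finset.Icc 1 T, (1 / (1 - β₂)) * (Real.log (S t) - Real.log (S (t-1))) := by
        apply Finset.sum_le_sum
        intro t ht
        exact key t (Finset.mem_Icc.mp ht).1
    _ = (1 / (1 - β₂)) * ∑ t ∈ Finset.Icc 1 T, (Real.log (S t) - Real.log (S (t-1))) := by
        rw [Finset.mul_sum]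
    _ = (1 / (1 - β₂)) * (Real.log (S T) - Real.log (S 0)) := by rw [htel T]
    _ = (1 / (1 - β₂)) *
        Real.log (1 + ((1 - β₂) / v₀) * ∑ t ∈ Finset.Icc 1 T, β₂ ^ (-(t : ℤ)) * (g t) ^ 2) := by
        congr 1
        rw [hS0, ← Real.log_div (ne_of_gt (hSpos T)) (ne_of_gt hv)]
        congr 1
        simp only [hSdef]
        field_simp
end

section
/- Let (Ω, F, (F_n), P) be a filtered probability space and (Z_n) a nonnegative adapted integrable process. Define X_n = ∑_{k=1}^n Z_k and Y_n = ∑_{k=1}^n E[Z_k | F_{k-1}]. Then for any bounded stopping time μ, any deterministic n, and any real s ≥ 1, ‖Y_{μ∧n}‖_{L^s} ≤ s ‖X_{μ∧n}‖_{L^s}. -/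
open MeasureTheory Finset Filter
open scoped ENNReal


lemma rpow_tangent {a b s : ℝ} (hb : 0 ≤ b) (hba : b ≤ a) (hs : 1 ≤ s) :
    a ^ s - b ^ s ≤ s * a ^ (s - 1) * (a - b) := by
  rcases eq_or_lt_of_le (hb.trans hba) with ha | ha
  · have hb0 : b = 0 := le_antisymm (hba.trans_eq ha.symm) hb
    rw [← ha, hb0]
    simp [Real.zero_rpow (by positivity : s ≠ 0)]
  · have hx : -1 ≤ b / a - 1 := by
      have : 0 ≤ b / a := div_nonneg hb ha.le
      linarith
    have hber := one_add_mul_self_le_rpow_one_add hx hs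
    have h1 : (1 : ℝ) + (b / a - 1) = b / a := by ring
    rw [h1, Real.div_rpow hb ha.le] at hber
    -- hber : 1 + s * (b/a - 1) ≤ b^s / a^s
    have has : (0:ℝ) < a ^ s := Real.rpow_pos_of_pos ha s
    have h2 : a ^ s * (1 + s * (b / a - 1)) ≤ b ^ s := by
      calc a ^ s * (1 + s * (b / a - 1)) ≤ a ^ s * (b ^ s / a ^ s) := by
            exact mul_le_mul_of_nonneg_left hber has.le
        _ = b ^ s := by field_simp
    have h3 : a ^ s * (s * (b / a - 1)) = s * a ^ (s-1) * (b - a) := by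
      have : a ^ s = a ^ (s - 1) * a := by
        rw [← Real.rpow_add_one ha.ne' (s-1)]; ring_nf
      rw [this]; field_simp
    nlinarith [h2, h3]

lemma abel_sum (a B : ℕ → ℝ) (n : ℕ) :
    ∑ k ∈ range n, B (k+1) * (a (k+1) - a k)
      = ∑ k ∈ range n, (a n - a k) * (B (k+1) - B k) + B 0 * (a n - a 0) := by
  induction n with
  | zero => simp
  | succ n ih =>
    have tel : ∑ k ∈ range n, (B (k+1) - B k) = B n - B 0 := sum_range_sub B n
    have expand : ∑ k ∈ range (n+1), (a (n+1) - a k) * (B (k+1) - B k)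
        = (∑ k ∈ range n, (a n - a k) * (B (k+1) - B k))
          + (a (n+1) - a n) * (B n - B 0) + (a (n+1) - a n) * (B (n+1) - B n) := by
      rw [sum_range_succ, ← tel, mul_sum, ← sum_add_distrib]
      congr 1
      exact sum_congr rfl fun k _ => by ring
    rw [sum_range_succ, ih, expand]
    ring

lemma min_sub_min_le {x y c : ℝ} (h : y ≤ x) : min x c - min y c ≤ x - y := by
  rcases le_total y c with h1 | h1
  · rw [min_eq_left h1]; exact sub_le_sub_right (min_le_left x c) y
  · rw [min_eq_right h1, min_eq_right (h1.trans h)]; simp; linarith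

lemma ptwise_master {s c : ℝ} (hs : 1 ≤ s) (hc : 0 < c) (A : ℕ → ℝ) (h0 : A 0 = 0)
    (hmono : ∀ k, A k ≤ A (k+1)) (n : ℕ) :
    min (A n) c ^ s ≤
      s * (∑ k ∈ range n, (A n - A k) * (min (A (k+1)) c ^ (s-1) - min (A k) c ^ (s-1))
           + min (A 0) c ^ (s-1) * A n) := by
  have hAmono : Monotone A := monotone_nat_of_le_succ hmono
  have hAnn : ∀ k, 0 ≤ A k := fun k => h0 ▸ hAmono (Nat.zero_le k)
  set a : ℕ → ℝ := fun k => min (A k) c with ha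
  set B : ℕ → ℝ := fun k => a k ^ (s-1) with hB
  have hann : ∀ k, 0 ≤ a k := fun k => le_min (hAnn k) hc.le
  have hamono : ∀ j k, j ≤ k → a j ≤ a k := fun j k h =>
    min_le_min (hAmono h) le_rfl
  have ha0 : a 0 = 0 := by simp [ha, h0, hc.le]
  have hBnn : ∀ k, 0 ≤ B k := fun k => Real.rpow_nonneg (hann k) _
  have hBmono : ∀ j k, j ≤ k → B j ≤ B k := fun j k h =>
    Real.rpow_le_rpow (hann j) (hamono j k h) (by linarith)
  have step1 : a n ^ s ≤ s * ∑ k ∈ range n, B (k+1) * (a (k+1) - a k) := by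
    have tel : ∑ k ∈ range n, (a (k+1) ^ s - a k ^ s) = a n ^ s - a 0 ^ s :=
      sum_range_sub (fun k => a k ^ s) n
    have h00 : a 0 ^ s = 0 := by rw [ha0, Real.zero_rpow (by positivity)]
    have : a n ^ s - a 0 ^ s ≤ ∑ k ∈ range n, s * B (k+1) * (a (k+1) - a k) := by
      rw [← tel]
      exact sum_le_sum fun k _ => rpow_tangent (hann k) (hamono k (k+1) (Nat.le_succ k)) hs
    rw [h00, sub_zero] at this
    refine this.trans (le_of_eq ?_)
    rw [mul_sum]
    exact sum_congr rfl fun k _ => by ring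
  rw [abel_sum a B n] at step1
  refine step1.trans (mul_le_mul_of_nonneg_left (add_le_add ?_ ?_) (by linarith))
  · refine sum_le_sum fun k hk => ?_
    have h1 : a n - a k ≤ A n - A k := min_sub_min_le (hAmono (mem_range.mp hk).le)
    have h2 : 0 ≤ B (k+1) - B k := sub_nonneg.mpr (hBmono k (k+1) (Nat.le_succ k))
    have h3 : 0 ≤ a n - a k := sub_nonneg.mpr (hamono k n (mem_range.mp hk).le)
    exact mul_le_mul_of_nonneg_right h1 h2
  · rw [ha0, sub_zero]
    exact mul_le_mul_of_nonneg_left (min_le_left _ _) (hBnn 0)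

lemma div_trick {T s K : ℝ} (hT : 0 ≤ T) (hs : 1 ≤ s) (hK : 0 ≤ K)
    (h : T ≤ s * K * T ^ (1 - 1/s)) : T ≤ (s * K) ^ s := by
  have hs0 : (0:ℝ) < s := by linarith
  have hsK : 0 ≤ s * K := by positivity
  have key : T ^ (1/s) ≤ s * K := by
    rcases eq_or_lt_of_le hT with hT0 | hT0
    · rw [← hT0, Real.zero_rpow (by positivity)]; exact hsK
    · have hmul : T ^ (1/s) * T ^ (1 - 1/s) = T := by
        rw [← Real.rpow_add hT0]
        norm_num
      have hpos : 0 < T ^ (1 - 1/s) := Real.rpow_pos_of_pos hT0 _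
      have h' : T ^ (1/s) * T ^ (1 - 1/s) ≤ s * K * T ^ (1-1/s) := by
        rw [hmul]; exact h
      exact le_of_mul_le_mul_right h' hpos
  calc T = (T ^ (1/s)) ^ s := by
        rw [← Real.rpow_mul hT, one_div, inv_mul_cancel₀ hs0.ne', Real.rpow_one]
    _ ≤ (s * K) ^ s := Real.rpow_le_rpow (Real.rpow_nonneg hT _) key hs0.le

theorem stmt_17 {Ω : Type*} {m0 : MeasurableSpace Ω}
    (P : Measure Ω) [IsProbabilityMeasure P]
    (ℱ : Filtration ℕ m0) (Z : ℕ → Ω → ℝ)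
    (hadapted : StronglyAdapted ℱ Z)
    (hnonneg : ∀ k ω, 0 ≤ Z k ω)
    (hint : ∀ k, Integrable (Z k) P)
    (X Y : ℕ → Ω → ℝ)
    (hX : ∀ n ω, X n ω = ∑ k ∈ Finset.Icc 1 n, Z k ω)
    (hY : ∀ n ω, Y n ω = ∑ k ∈ Finset.Icc 1 n, (P[Z k | ℱ (k - 1)]) ω)
    (μ : Ω → ℕ) (hμ : IsStoppingTime ℱ (fun ω => (μ ω : WithTop ℕ))) (N : ℕ) (hbdd : ∀ ω, μ ω ≤ N)
    (n : ℕ) (s : ℝ) (hs : 1 ≤ s) :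
    eLpNorm (fun ω => Y (min (μ ω) n) ω) (ENNReal.ofReal s) P
      ≤ ENNReal.ofReal s * eLpNorm (fun ω => X (min (μ ω) n) ω) (ENNReal.ofReal s) P := by
  classical
  have hs0 : (0:ℝ) < s := lt_of_lt_of_le one_pos hs
  set ps : ℝ≥0∞ := ENNReal.ofReal s with hpsdef
  have hps0 : ps ≠ 0 := by
    simp only [hpsdef, Ne, ENNReal.ofReal_eq_zero, not_le]; linarith
  have hpstop : ps ≠ ⊤ := ENNReal.ofReal_ne_top
  have hpsreal : ps.toReal = s := ENNReal.toReal_ofReal hs0.le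
  set τ : Ω → ℕ := fun ω => min (μ ω) n with hτdef
  have hτ : IsStoppingTime ℱ (fun ω => (τ ω : WithTop ℕ)) := by
    intro i
    have h := hμ.min (isStoppingTime_const ℱ n) i
    have e : {ω | ((τ ω : ℕ) : WithTop ℕ) ≤ (i : WithTop ℕ)}
        = {ω | min ((μ ω : WithTop ℕ)) ((n : ℕ) : WithTop ℕ) ≤ (i : WithTop ℕ)} := by
      ext ω; simp [hτdef]
    show MeasurableSet[ℱ i] {ω | ((τ ω : ℕ) : WithTop ℕ) ≤ (i : WithTop ℕ)}
    rw [e]; exact h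
  have hτn : ∀ ω, τ ω ≤ n := fun ω => min_le_right _ _
  set ζ : ℕ → Ω → ℝ := fun j => P[Z j | ℱ (j-1)] with hζdef
  set g : ℕ → Ω → ℝ := fun j => Set.indicator {ω | j ≤ τ ω} (ζ j) with hgdef
  set f : ℕ → Ω → ℝ := fun j => Set.indicator {ω | j ≤ τ ω} (Z j) with hfdef
  set A : ℕ → Ω → ℝ := fun k ω => ∑ j ∈ Finset.Icc 1 k, max (g j ω) 0 with hAdef
  set W : Ω → ℝ := fun ω => ∑ j ∈ Finset.Icc 1 n, f j ω with hWdef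
  -- measurability of stopping sets
  have hsetτ : ∀ j : ℕ, 1 ≤ j → MeasurableSet[ℱ (j-1)] {ω | j ≤ τ ω} := by
    intro j hj
    have h : {ω | j ≤ τ ω} = {ω | τ ω ≤ j - 1}ᶜ := by
      ext ω; simp only [Set.mem_compl_iff, Set.mem_setOf_eq, not_le]; omega
    have h2 : {ω | τ ω ≤ j - 1} = {ω | ((τ ω : ℕ) : WithTop ℕ) ≤ ((j - 1 : ℕ) : WithTop ℕ)} := by
      ext ω; simp only [Set.mem_setOf_eq]; exact_mod_cast Iff.rfl
    rw [h, h2]; exact (hτ (j-1)).compl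
  have hsetτ0 : ∀ j : ℕ, 1 ≤ j → MeasurableSet {ω | j ≤ τ ω} :=
    fun j hj => ℱ.le (j-1) _ (hsetτ j hj)
  have hrpm : ∀ {m : MeasurableSpace Ω} (F : Ω → ℝ) (q : ℝ), 0 ≤ q →
      Measurable[m] F → Measurable[m] (fun ω => F ω ^ q) :=
    fun F q hq hF => (Real.continuous_rpow_const hq).measurable.comp hF
  have hgsm : ∀ j : ℕ, 1 ≤ j → StronglyMeasurable[ℱ (j-1)] (g j) :=
    fun j hj => stronglyMeasurable_condExp.indicator (hsetτ j hj)
  have hAsm : ∀ (k j : ℕ), j ≤ k + 1 → Measurable[ℱ k] (A j) := by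
    intro k j hjk
    apply Finset.measurable_sum
    intro i hi
    have hi1 : 1 ≤ i := (Finset.mem_Icc.mp hi).1
    have hik : i - 1 ≤ k := by have := (Finset.mem_Icc.mp hi).2; omega
    exact (((hgsm i hi1).measurable.mono (ℱ.mono hik) le_rfl).max measurable_const)
  -- pointwise facts
  have hA0 : ∀ ω, A 0 ω = 0 := fun ω => by simp [hAdef]
  have hAstep : ∀ k ω, A (k+1) ω = A k ω + max (g (k+1) ω) 0 :=
    fun k ω => Finset.sum_Icc_succ_top (by omega) _
  have hAmono : ∀ k ω, A k ω ≤ A (k+1) ω := fun k ω => by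
    rw [hAstep]; linarith [le_max_right (g (k+1) ω) (0:ℝ)]
  have hAnn : ∀ k ω, 0 ≤ A k ω :=
    fun k ω => Finset.sum_nonneg fun i _ => le_max_right _ _
  have hfnn : ∀ j ω, 0 ≤ f j ω :=
    fun j ω => Set.indicator_apply_nonneg fun _ => hnonneg j ω
  have hWnn : ∀ ω, 0 ≤ W ω := fun ω => Finset.sum_nonneg fun j _ => hfnn j ω
  -- cut-sum identity
  have hsum_cut : ∀ (v : ℕ → Ω → ℝ) (ω : Ω), ∑ j ∈ Finset.Icc 1 (τ ω), v j ω
      = ∑ j ∈ Finset.Icc 1 n, Set.indicator {ω' | j ≤ τ ω'} (v j) ω := by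
    intro v ω
    have h1 : ∀ j, Set.indicator {ω' | j ≤ τ ω'} (v j) ω = if j ≤ τ ω then v j ω else 0 :=
      fun j => Set.indicator_apply _ _ _
    simp only [h1]
    rw [Finset.sum_ite, Finset.sum_const_zero, add_zero]
    apply Finset.sum_congr _ (fun _ _ => rfl)
    ext i
    simp only [Finset.mem_filter, Finset.mem_Icc]
    have := hτn ω
    omega
  have hXW : ∀ ω, X (min (μ ω) n) ω = W ω := fun ω => by
    rw [hX]; exact hsum_cut Z ω
  have hYg : ∀ ω, Y (min (μ ω) n) ω = ∑ j ∈ Finset.Icc 1 n, g j ω := fun ω => by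
    rw [hY]; exact hsum_cut ζ ω
  have hζnn : ∀ j, 0 ≤ᵐ[P] ζ j := fun j => condExp_nonneg (Eventually.of_forall (hnonneg j))
  have hgnn : ∀ j, 0 ≤ᵐ[P] g j := fun j => (hζnn j).mono fun ω h =>
    Set.indicator_apply_nonneg fun _ => h
  have hYA : (fun ω => Y (min (μ ω) n) ω) =ᵐ[P] A n := by
    have hae : ∀ᵐ ω ∂P, ∀ j ∈ Finset.Icc 1 n, 0 ≤ g j ω :=
      (ae_ball_iff (Finset.Icc 1 n).countable_toSet).mpr fun j _ => hgnn j
    filter_upwards [hae] with ω hω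
    rw [hYg ω]
    exact Finset.sum_congr rfl fun j hj => (max_eq_left (hω j hj)).symm
  -- integrability
  have hζint : ∀ j, Integrable (ζ j) P := fun j => integrable_condExp
  have hgint : ∀ j : ℕ, 1 ≤ j → Integrable (g j) P :=
    fun j hj => (hζint j).indicator (hsetτ0 j hj)
  have hfint : ∀ j : ℕ, 1 ≤ j → Integrable (f j) P :=
    fun j hj => (hint j).indicator (hsetτ0 j hj)
  have hAint : ∀ k, Integrable (A k) P := by
    intro k
    apply integrable_finset_sum
    intro j hj
    have := (hgint j (Finset.mem_Icc.mp hj).1).pos_part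
    exact this.congr (Eventually.of_forall fun ω => rfl)
  have hWint : Integrable W P :=
    integrable_finset_sum _ fun j hj => hfint j (Finset.mem_Icc.mp hj).1
  have hmulint : ∀ (h G : Ω → ℝ) (M : ℝ), Integrable h P → AEStronglyMeasurable G P →
      (∀ ω, |G ω| ≤ M) → Integrable (fun ω => h ω * G ω) P := by
    intro h G M hh hG hb
    have h1 := hh.bdd_mul hG (Eventually.of_forall fun ω => by
      simpa [Real.norm_eq_abs] using hb ω)
    exact h1.congr (Eventually.of_forall fun ω => mul_comm _ _)
  -- conditional expectation step
  have hstep : ∀ j : ℕ, 1 ≤ j → ∀ (G : Ω → ℝ) (M : ℝ), 0 ≤ M →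
      StronglyMeasurable[ℱ (j-1)] G → (∀ ω, |G ω| ≤ M) →
      ∫ ω, g j ω * G ω ∂P = ∫ ω, f j ω * G ω ∂P := by
    intro j hj G M hM hGsm hGb
    set H : Ω → ℝ := Set.indicator {ω | j ≤ τ ω} G with hHdef
    have hHsm : StronglyMeasurable[ℱ (j-1)] H := hGsm.indicator (hsetτ j hj)
    have hHb : ∀ᵐ ω ∂P, ‖H ω‖ ≤ M := Eventually.of_forall fun ω => by
      rw [Real.norm_eq_abs, hHdef]
      by_cases hmem : ω ∈ {ω' | j ≤ τ ω'}
      · rw [Set.indicator_of_mem hmem]; exact hGb ω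
      · rw [Set.indicator_of_notMem hmem]; simpa using hM
    have hmul := condExp_stronglyMeasurable_mul_of_bound (ℱ.le (j-1)) hHsm (hint j) M hHb
    have hgG : ∀ ω, g j ω * G ω = H ω * ζ j ω := by
      intro ω
      by_cases hmem : ω ∈ {ω' | j ≤ τ ω'} <;>
        simp [hgdef, hHdef, Set.indicator_of_mem, Set.indicator_of_notMem, hmem, mul_comm]
    have hfG : ∀ ω, f j ω * G ω = H ω * Z j ω := by
      intro ω
      by_cases hmem : ω ∈ {ω' | j ≤ τ ω'} <;>
        simp [hfdef, hHdef, Set.indicator_of_mem, Set.indicator_of_notMem, hmem, mul_comm]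
    calc ∫ ω, g j ω * G ω ∂P = ∫ ω, H ω * ζ j ω ∂P := by simp_rw [hgG]
      _ = ∫ ω, (P[H * Z j | ℱ (j-1)]) ω ∂P := by
          refine (integral_congr_ae ?_).symm
          filter_upwards [hmul] with ω hω
          simpa using hω
      _ = ∫ ω, (H * Z j) ω ∂P := integral_condExp (ℱ.le (j-1))
      _ = ∫ ω, f j ω * G ω ∂P := by simp_rw [Pi.mul_apply, ← hfG]

  -- key domination step
  have key : ∀ k : ℕ, k ≤ n → ∀ (G : Ω → ℝ) (M : ℝ), 0 ≤ M → Measurable[ℱ k] G →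
      (∀ ω, 0 ≤ G ω) → (∀ ω, G ω ≤ M) →
      ∫ ω, (A n ω - A k ω) * G ω ∂P ≤ ∫ ω, W ω * G ω ∂P := by
    intro k hkn G M hM hGm hGnn hGb
    have hGabs : ∀ ω, |G ω| ≤ M := fun ω => abs_le.mpr ⟨by linarith [hGnn ω], hGb ω⟩
    have hGsm0 : AEStronglyMeasurable G P :=
      ((hGm.mono (ℱ.le k) le_rfl).stronglyMeasurable).aestronglyMeasurable
    have hIccIoc : ∀ t : ℕ, Finset.Icc 1 t = Finset.Ioc 0 t := by
      intro t; ext i; simp only [Finset.mem_Icc, Finset.mem_Ioc]; omega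
    have hAIoc : ∀ (t : ℕ) (ω : Ω), A t ω = ∑ j ∈ Finset.Ioc 0 t, max (g j ω) 0 := by
      intro t ω; rw [hAdef]; simp only []; rw [hIccIoc]
    have hdiff : ∀ ω, A n ω - A k ω = ∑ j ∈ Finset.Ioc k n, max (g j ω) 0 := by
      intro ω
      have h1 := Finset.sum_Ioc_consecutive (fun j => max (g j ω) 0) (Nat.zero_le k) hkn
      have h2 := hAIoc k ω
      have h3 := hAIoc n ω
      linarith
    have hjint : ∀ j ∈ Finset.Ioc k n, Integrable (fun ω => max (g j ω) 0 * G ω) P := by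
      intro j hj
      have hj1 : 1 ≤ j := by have := Finset.mem_Ioc.mp hj; omega
      exact hmulint _ G M ((hgint j hj1).pos_part.congr
        (Filter.Eventually.of_forall fun ω => rfl)) hGsm0 hGabs
    have hfjint : ∀ j ∈ Finset.Ioc k n, Integrable (fun ω => f j ω * G ω) P := by
      intro j hj
      have hj1 : 1 ≤ j := by have := Finset.mem_Ioc.mp hj; omega
      exact hmulint _ G M (hfint j hj1) hGsm0 hGabs
    calc ∫ ω, (A n ω - A k ω) * G ω ∂P
        = ∫ ω, ∑ j ∈ Finset.Ioc k n, max (g j ω) 0 * G ω ∂P := by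
          refine integral_congr_ae (Filter.Eventually.of_forall fun ω => ?_)
          simp only [hdiff, Finset.sum_mul]
      _ = ∑ j ∈ Finset.Ioc k n, ∫ ω, max (g j ω) 0 * G ω ∂P := integral_finset_sum _ hjint
      _ = ∑ j ∈ Finset.Ioc k n, ∫ ω, f j ω * G ω ∂P := by
          refine Finset.sum_congr rfl fun j hj => ?_
          have hj1 : 1 ≤ j := by have := Finset.mem_Ioc.mp hj; omega
          have hjk : k ≤ j - 1 := by have := Finset.mem_Ioc.mp hj; omega
          have h1 : ∫ ω, max (g j ω) 0 * G ω ∂P = ∫ ω, g j ω * G ω ∂P := by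
            refine integral_congr_ae ?_
            filter_upwards [hgnn j] with ω h
            simp only [Pi.zero_apply] at h
            rw [max_eq_left h]
          rw [h1]
          exact hstep j hj1 G M hM
            ((hGm.mono (ℱ.mono hjk) le_rfl).stronglyMeasurable) hGabs
      _ = ∫ ω, (∑ j ∈ Finset.Ioc k n, f j ω) * G ω ∂P := by
          rw [← integral_finset_sum _ hfjint]
          refine integral_congr_ae (Filter.Eventually.of_forall fun ω => ?_)
          simp only [Finset.sum_mul]
      _ ≤ ∫ ω, W ω * G ω ∂P := by
          refine integral_mono (hmulint _ G M (integrable_finset_sum _ fun j hj =>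
            hfint j (by have := Finset.mem_Ioc.mp hj; omega)) hGsm0 hGabs)
            (hmulint W G M hWint hGsm0 hGabs) fun ω => ?_
          refine mul_le_mul_of_nonneg_right ?_ (hGnn ω)
          refine Finset.sum_le_sum_of_subset_of_nonneg ?_ fun j _ _ => hfnn j ω
          intro j hj
          have := Finset.mem_Ioc.mp hj
          exact Finset.mem_Icc.mpr ⟨by omega, this.2⟩
  -- reduce the goal
  rw [eLpNorm_congr_ae hYA, show (fun ω => X (min (μ ω) n) ω) = W from funext hXW]
  by_cases hWtop : eLpNorm W ps P = ⊤
  · rw [hWtop, ENNReal.mul_top hps0]; exact le_top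
  have hWsm : StronglyMeasurable W := by
    apply Finset.stronglyMeasurable_fun_sum
    intro j hj
    exact ((hadapted j).mono (ℱ.le j)).indicator (hsetτ0 j (Finset.mem_Icc.mp hj).1)
  have hWmem : MemLp W ps P := ⟨hWsm.aestronglyMeasurable, lt_top_iff_ne_top.mpr hWtop⟩
  have hWs_nn : ∀ ω, 0 ≤ W ω ^ s := fun ω => Real.rpow_nonneg (hWnn ω) s
  have hWs_int : Integrable (fun ω => W ω ^ s) P := by
    have h1 := hWmem.integrable_norm_rpow hps0 hpstop
    simp only [hpsdef, ENNReal.toReal_ofReal hs0.le] at h1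
    exact h1.congr (Filter.Eventually.of_forall fun ω => by
      simp only [Real.norm_eq_abs, abs_of_nonneg (hWnn ω)])
  set K : ℝ := (∫ ω, W ω ^ s ∂P) ^ (1/s) with hKdef
  have hIs_nn : 0 ≤ ∫ ω, W ω ^ s ∂P := integral_nonneg hWs_nn
  have hK0 : 0 ≤ K := Real.rpow_nonneg hIs_nn _
  have hKnorm : ENNReal.ofReal K = eLpNorm W ps P := by
    rw [eLpNorm_eq_lintegral_rpow_enorm_toReal hps0 hpstop, hpsreal]
    have h1 : ∫⁻ ω, ‖W ω‖ₑ ^ s ∂P = ENNReal.ofReal (∫ ω, W ω ^ s ∂P) := by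
      rw [ofReal_integral_eq_lintegral_ofReal hWs_int (Filter.Eventually.of_forall hWs_nn)]
      refine lintegral_congr fun ω => ?_
      rw [← ENNReal.ofReal_rpow_of_nonneg (hWnn ω) hs0.le, Real.enorm_eq_ofReal (hWnn ω)]
    rw [h1, ENNReal.ofReal_rpow_of_nonneg hIs_nn (by positivity), ← hKdef]
  -- measurability and integrability of truncations
  have hAnm : Measurable (A n) := (hAsm n n (by omega)).mono (ℱ.le n) le_rfl
  have hminmeas : ∀ c : ℝ, Measurable (fun ω => min (A n ω) c ^ s) :=
    fun c => hrpm _ _ hs0.le (hAnm.min measurable_const)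
  have hmin_nn : ∀ (c : ℝ) (k : ℕ) (ω : Ω), 0 < c → 0 ≤ min (A k ω) c :=
    fun c k ω hc => le_min (hAnn k ω) hc.le
  have hmins_nn : ∀ (c : ℝ), 0 < c → ∀ ω, 0 ≤ min (A n ω) c ^ s :=
    fun c hc ω => Real.rpow_nonneg (hmin_nn c n ω hc) _
  have hmins_int : ∀ c : ℝ, 0 < c → Integrable (fun ω => min (A n ω) c ^ s) P := by
    intro c hc
    refine Integrable.mono' (integrable_const (c ^ s)) (hminmeas c).aestronglyMeasurable
      (Filter.Eventually.of_forall fun ω => ?_)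
    rw [Real.norm_eq_abs, abs_of_nonneg (hmins_nn c hc ω)]
    exact Real.rpow_le_rpow (hmin_nn c n ω hc) (min_le_right _ _) hs0.le
  -- main truncated estimate
  have main : ∀ c : ℝ, 0 < c → ∫ ω, min (A n ω) c ^ s ∂P ≤ (s*K)^s := by
    intro c hc
    obtain ⟨B, hBdef⟩ : ∃ B : ℕ → Ω → ℝ, ∀ k ω, B k ω = min (A k ω) c ^ (s-1) :=
      ⟨_, fun _ _ => rfl⟩
    have hs1 : (0:ℝ) ≤ s - 1 := by linarith
    have hBnn : ∀ k ω, 0 ≤ B k ω := fun k ω =>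
      hBdef k ω ▸ Real.rpow_nonneg (hmin_nn c k ω hc) _
    have hBle : ∀ k ω, B k ω ≤ c ^ (s-1) := fun k ω =>
      hBdef k ω ▸ Real.rpow_le_rpow (hmin_nn c k ω hc) (min_le_right _ _) hs1
    have hBmono : ∀ k ω, B k ω ≤ B (k+1) ω := fun k ω => by
      rw [hBdef, hBdef]
      exact Real.rpow_le_rpow (hmin_nn c k ω hc) (min_le_min (hAmono k ω) le_rfl) hs1
    have hBm : ∀ (k j : ℕ), j ≤ k + 1 → Measurable[ℱ k] (B j) := by
      intro k j h
      have heq : B j = fun ω => min (A j ω) c ^ (s-1) := funext fun ω => hBdef j ω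
      rw [heq]
      exact hrpm _ _ hs1 ((hAsm k j h).min measurable_const)
    have hB0 : ∀ ω, B 0 ω = (0:ℝ) ^ (s-1) := fun ω => by
      rw [hBdef, hA0 ω, min_eq_left hc.le]
    set κ : ℝ := (0:ℝ) ^ (s-1) with hκdef
    have hκnn : 0 ≤ κ := Real.rpow_nonneg le_rfl _
    have hDb : ∀ k ω, |B (k+1) ω - B k ω| ≤ c ^ (s-1) := fun k ω =>
      abs_le.mpr ⟨by linarith [hBnn (k+1) ω, hBle k ω], by linarith [hBnn k ω, hBle (k+1) ω]⟩
    have hDm : ∀ k : ℕ, Measurable[ℱ k] (fun ω => B (k+1) ω - B k ω) :=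
      fun k => (hBm k (k+1) le_rfl).sub (hBm k k (by omega))
    have hDsm : ∀ k : ℕ, AEStronglyMeasurable (fun ω => B (k+1) ω - B k ω) P :=
      fun k => (((hDm k).mono (ℱ.le k) le_rfl).stronglyMeasurable).aestronglyMeasurable
    have hDint : ∀ k, Integrable (fun ω => (A n ω - A k ω) * (B (k+1) ω - B k ω)) P :=
      fun k => hmulint _ _ (c^(s-1)) ((hAint n).sub (hAint k)) (hDsm k) (hDb k)
    have hWD_int : ∀ k, Integrable (fun ω => W ω * (B (k+1) ω - B k ω)) P :=
      fun k => hmulint _ _ (c^(s-1)) hWint (hDsm k) (hDb k)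
    have hAκ_int : Integrable (fun ω => (A n ω - A 0 ω) * κ) P :=
      ((hAint n).sub (hAint 0)).mul_const κ
    have hT_nn : 0 ≤ ∫ ω, min (A n ω) c ^ s ∂P := integral_nonneg (hmins_nn c hc)
    have chain : ∫ ω, min (A n ω) c ^ s ∂P ≤ s * ∫ ω, W ω * B n ω ∂P := by
      have hRint : Integrable (fun ω =>
          (∑ k ∈ range n, (A n ω - A k ω) * (B (k+1) ω - B k ω)) + (A n ω - A 0 ω) * κ) P :=
        (integrable_finset_sum _ fun k _ => hDint k).add hAκ_int
      have hpt : ∀ ω, min (A n ω) c ^ s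
          ≤ s * ((∑ k ∈ range n, (A n ω - A k ω) * (B (k+1) ω - B k ω))
                 + (A n ω - A 0 ω) * κ) := by
        intro ω
        have h := ptwise_master hs hc (fun k => A k ω) (hA0 ω) (fun k => hAmono k ω) n
        simp only [← hBdef] at h
        have h2 : B 0 ω * A n ω = (A n ω - A 0 ω) * κ := by
          rw [hB0 ω, hA0 ω, sub_zero, mul_comm, hκdef]
        rw [h2] at h
        exact h
      calc ∫ ω, min (A n ω) c ^ s ∂P
          ≤ ∫ ω, s * ((∑ k ∈ range n, (A n ω - A k ω) * (B (k+1) ω - B k ω))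
               + (A n ω - A 0 ω) * κ) ∂P :=
            integral_mono (hmins_int c hc) (hRint.const_mul s) hpt
        _ = s * ((∑ k ∈ range n, ∫ ω, (A n ω - A k ω) * (B (k+1) ω - B k ω) ∂P)
               + ∫ ω, (A n ω - A 0 ω) * κ ∂P) := by
            rw [integral_const_mul]
            congr 1
            rw [integral_add (integrable_finset_sum _ fun k _ => hDint k) hAκ_int,
              integral_finset_sum _ fun k _ => hDint k]
        _ ≤ s * ((∑ k ∈ range n, ∫ ω, W ω * (B (k+1) ω - B k ω) ∂P)
               + ∫ ω, W ω * κ ∂P) := by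
            refine mul_le_mul_of_nonneg_left (add_le_add ?_ ?_) hs0.le
            · refine Finset.sum_le_sum fun k hk => ?_
              exact key k (Finset.mem_range.mp hk).le _ (c^(s-1)) (by positivity) (hDm k)
                (fun ω => sub_nonneg.mpr (hBmono k ω))
                (fun ω => by linarith [hBle (k+1) ω, hBnn k ω])
            · exact key 0 (Nat.zero_le n) (fun _ => κ) κ hκnn measurable_const
                (fun _ => hκnn) (fun _ => le_rfl)
        _ = s * ∫ ω, W ω * B n ω ∂P := by
            congr 1
            rw [← integral_finset_sum _ fun k _ => hWD_int k,
              ← integral_add (integrable_finset_sum _ fun k _ => hWD_int k) (hWint.mul_const κ)]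
            refine integral_congr_ae (Filter.Eventually.of_forall fun ω => ?_)
            show (∑ k ∈ range n, W ω * (B (k+1) ω - B k ω)) + W ω * κ = W ω * B n ω
            rw [← Finset.mul_sum, ← mul_add]
            congr 1
            have htel : ∑ i ∈ Finset.range n, (B (i+1) ω - B i ω) = B n ω - B 0 ω :=
              Finset.sum_range_sub (fun k => B k ω) n
            rw [htel, hB0 ω, hκdef]
            ring
    have claimB : ∫ ω, W ω * B n ω ∂P
        ≤ K * (∫ ω, min (A n ω) c ^ s ∂P) ^ (1 - 1/s) := by
      rcases eq_or_lt_of_le hs with hseq | hslt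
      · have hsm1 : s - 1 = 0 := by rw [← hseq]; norm_num
        have hsub : (1:ℝ) - 1/s = 0 := by rw [← hseq]; norm_num
        have e1 : ∀ ω, W ω * B n ω = W ω := fun ω => by
          rw [hBdef, hsm1, Real.rpow_zero, mul_one]
        have e3 : K = ∫ ω, W ω ∂P := by
          rw [hKdef, ← hseq, show (1:ℝ)/1 = 1 by norm_num, Real.rpow_one]
          exact integral_congr_ae (Filter.Eventually.of_forall fun ω => Real.rpow_one (W ω))
        rw [hsub, Real.rpow_zero, mul_one, e3]
        exact le_of_eq (integral_congr_ae (Filter.Eventually.of_forall e1))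
      · set q : ℝ := s / (s - 1) with hqdef
        have hsm1 : (0:ℝ) < s - 1 := by linarith
        have hq1 : 1/q = 1 - 1/s := by rw [hqdef]; field_simp
        have hpq : Real.HolderConjugate s q := by
          rw [Real.holderConjugate_iff]; constructor
          · exact hslt
          · rw [hqdef]; field_simp; ring
        have hBq_mem : MemLp (B n) (ENNReal.ofReal q) P := by
          refine MemLp.of_bound ?_ (c^(s-1)) (Filter.Eventually.of_forall fun ω => ?_)
          · exact (((hBm n n (by omega)).mono (ℱ.le n) le_rfl).stronglyMeasurable).aestronglyMeasurable
          · rw [Real.norm_eq_abs, abs_of_nonneg (hBnn n ω)]; exact hBle n ω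
        have hH := integral_mul_le_Lp_mul_Lq_of_nonneg hpq (Filter.Eventually.of_forall hWnn)
          (Filter.Eventually.of_forall (hBnn n)) hWmem hBq_mem
        have hBq : ∀ ω, B n ω ^ q = min (A n ω) c ^ s := by
          intro ω
          rw [hBdef, ← Real.rpow_mul (hmin_nn c n ω hc)]
          congr 1
          rw [hqdef]; field_simp
        have e4 : ∫ ω, B n ω ^ q ∂P = ∫ ω, min (A n ω) c ^ s ∂P :=
          integral_congr_ae (Filter.Eventually.of_forall hBq)
        rw [e4, hq1, ← hKdef] at hH
        exact hH
    have final : ∫ ω, min (A n ω) c ^ s ∂P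
        ≤ s * K * (∫ ω, min (A n ω) c ^ s ∂P) ^ (1 - 1/s) := by
      calc ∫ ω, min (A n ω) c ^ s ∂P ≤ s * ∫ ω, W ω * B n ω ∂P := chain
        _ ≤ s * (K * (∫ ω, min (A n ω) c ^ s ∂P) ^ (1 - 1/s)) :=
            mul_le_mul_of_nonneg_left claimB hs0.le
        _ = s * K * (∫ ω, min (A n ω) c ^ s ∂P) ^ (1 - 1/s) := (mul_assoc _ _ _).symm
    exact div_trick hT_nn hs hK0 final
  -- pass to the limit
  rw [← hKnorm, ← ENNReal.ofReal_mul hs0.le]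
  rw [eLpNorm_eq_lintegral_rpow_enorm_toReal hps0 hpstop, hpsreal]
  have hbound : ∫⁻ ω, ‖A n ω‖ₑ ^ s ∂P ≤ ENNReal.ofReal ((s*K)^s) := by
    have hFmeas : ∀ m : ℕ, AEMeasurable
        (fun ω => ENNReal.ofReal (min (A n ω) ((m:ℝ)+1) ^ s)) P :=
      fun m => ((hminmeas ((m:ℝ)+1)).ennreal_ofReal).aemeasurable
    have hFmono : ∀ ω, Monotone (fun m : ℕ =>
        ENNReal.ofReal (min (A n ω) ((m:ℝ)+1) ^ s)) := by
      intro ω m m' hmm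
      refine ENNReal.ofReal_le_ofReal ?_
      refine Real.rpow_le_rpow (hmin_nn _ n ω (by positivity)) ?_ hs0.le
      exact min_le_min le_rfl (by exact_mod_cast add_le_add_left (Nat.cast_le.mpr hmm) 1)
    have hFtend : ∀ ω, Filter.Tendsto (fun m : ℕ =>
        ENNReal.ofReal (min (A n ω) ((m:ℝ)+1) ^ s)) Filter.atTop
        (nhds (‖A n ω‖ₑ ^ s)) := by
      intro ω
      apply tendsto_atTop_of_eventually_const (i₀ := Nat.ceil (A n ω))
      intro m hm
      have hmin : min (A n ω) ((m:ℝ)+1) = A n ω := by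
        refine min_eq_left ?_
        have h1 : A n ω ≤ (Nat.ceil (A n ω) : ℝ) := Nat.le_ceil _
        have h2 : ((Nat.ceil (A n ω) : ℕ) : ℝ) ≤ (m:ℝ) := Nat.cast_le.mpr hm
        linarith
      rw [hmin, ← ENNReal.ofReal_rpow_of_nonneg (hAnn n ω) hs0.le,
        Real.enorm_eq_ofReal (hAnn n ω)]
    have htendint := lintegral_tendsto_of_tendsto_of_monotone hFmeas
      (Filter.Eventually.of_forall hFmono) (Filter.Eventually.of_forall hFtend)
    refine le_of_tendsto' htendint fun m => ?_
    rw [← ofReal_integral_eq_lintegral_ofReal (hmins_int ((m:ℝ)+1) (by positivity))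
      (Filter.Eventually.of_forall (hmins_nn ((m:ℝ)+1) (by positivity)))]
    exact ENNReal.ofReal_le_ofReal (main ((m:ℝ)+1) (by positivity))
  calc (∫⁻ ω, ‖A n ω‖ₑ ^ s ∂P) ^ (1/s)
      ≤ (ENNReal.ofReal ((s*K)^s)) ^ (1/s) := ENNReal.rpow_le_rpow hbound (by positivity)
    _ = ENNReal.ofReal (s*K) := by
        rw [← ENNReal.ofReal_rpow_of_nonneg (by positivity : (0:ℝ) ≤ s*K) hs0.le,
          ← ENNReal.rpow_mul, mul_one_div_cancel hs0.ne', ENNReal.rpow_one]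
end

section
/- Let T ≥ 10 be an integer, η > 0, v > 0, ε > 0, and define Δ_{t,1} := (η/√(T-1)) · 1/(√(v_{t-1}) + ε) − (η/√T) · 1/(√(v_t) + ε), where v_t = (1 − 1/T) v_{t-1} + (1/T) g_t² with v_0 = v and g_1,...,g_T ∈ ℝ. Then Δ_{t,1} ≥ 0 for all 1 ≤ t ≤ T, and ∑_{t=1}^{T} Δ_{t,1} ≤ 6η (1/√v − 1/√(S_T)) + η/(2√v) ≤ (13/(2√v)) η, where S_t := v + ∑_{s=1}^{t} g_s². -/
lemma aux_pow (T : ℕ) (hT : 10 ≤ T) : (0.33 : ℝ) ≤ (1 - 1/(T:ℝ))^T := by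
  have hT10 : (10:ℝ) ≤ (T:ℝ) := by exact_mod_cast hT
  have hTpos : (0:ℝ) < T := by linarith
  have hT1 : (1:ℝ) < T := by linarith
  have hTm1 : (0:ℝ) < (T:ℝ) - 1 := by linarith
  have hTm1' : ((T:ℝ) - 1) ≠ 0 := ne_of_gt hTm1
  have hq : (0:ℝ) < 1 - 1/(T:ℝ) := by
    have : 1/(T:ℝ) ≤ 1/10 := by
      apply one_div_le_one_div_of_le <;> linarith
    linarith
  have hq9 : (9:ℝ)/10 ≤ 1 - 1/(T:ℝ) := by
    have : 1/(T:ℝ) ≤ 1/10 := by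
      apply one_div_le_one_div_of_le <;> linarith
    linarith
  -- (1 + 1/(T-1))^(T-1) ≤ exp 1
  have hcast : ((T - 1 : ℕ) : ℝ) = (T:ℝ) - 1 := by
    have : 1 ≤ T := by omega
    push_cast [this]; ring
  have h1 : (1 + 1/((T:ℝ)-1))^(T-1) ≤ Real.exp 1 := by
    have hle : (1 + 1/((T:ℝ)-1)) ≤ Real.exp (1/((T:ℝ)-1)) := by
      have := Real.add_one_le_exp (1/((T:ℝ)-1)); linarith
    calc (1 + 1/((T:ℝ)-1))^(T-1) ≤ (Real.exp (1/((T:ℝ)-1)))^(T-1) := by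
          apply pow_le_pow_left₀ (by positivity) hle
      _ = Real.exp (((T-1:ℕ):ℝ) * (1/((T:ℝ)-1))) := by
          rw [← Real.exp_nat_mul]
      _ = Real.exp 1 := by
          rw [hcast]; congr 1; field_simp
  -- q^(T-1) ≥ 1/exp 1
  have hprod : ((1 - 1/(T:ℝ)) * (1 + 1/((T:ℝ)-1))) = 1 := by
    field_simp
    ring
  have hqpow : 1 / Real.exp 1 ≤ (1 - 1/(T:ℝ))^(T-1) := by
    have hpow : (1 - 1/(T:ℝ))^(T-1) * (1 + 1/((T:ℝ)-1))^(T-1) = 1 := by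
      rw [← mul_pow, hprod, one_pow]
    have hpos : (0:ℝ) < (1 + 1/((T:ℝ)-1))^(T-1) := by positivity
    rw [div_le_iff₀ (Real.exp_pos 1)]
    calc (1:ℝ) = (1 - 1/(T:ℝ))^(T-1) * (1 + 1/((T:ℝ)-1))^(T-1) := hpow.symm
      _ ≤ (1 - 1/(T:ℝ))^(T-1) * Real.exp 1 := by
          apply mul_le_mul_of_nonneg_left h1 (by positivity)
  have hsplit : (1 - 1/(T:ℝ))^T = (1 - 1/(T:ℝ))^(T-1) * (1 - 1/(T:ℝ)) := by
    rw [← pow_succ]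
    congr 1
    omega
  have hexp : Real.exp 1 < 2.7182818286 := Real.exp_one_lt_d9
  have h2 : (1:ℝ)/2.7182818286 ≤ (1 - 1/(T:ℝ))^(T-1) := by
    have : (1:ℝ)/2.7182818286 ≤ 1/Real.exp 1 := by
      apply one_div_le_one_div_of_le (Real.exp_pos 1) (le_of_lt hexp)
    linarith
  rw [hsplit]
  have : (1:ℝ)/2.7182818286 * (9/10) ≤ (1 - 1/(T:ℝ))^(T-1) * (1 - 1/(T:ℝ)) := by
    apply mul_le_mul h2 hq9 (by norm_num) (by positivity)
  nlinarith

lemma per_term_nonneg (Tr η ε vp vc g2 : ℝ) (hTr : 10 ≤ Tr) (hη : 0 < η) (hε : 0 < ε)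
    (hvp : 0 < vp) (hvc : 0 < vc) (hg2 : 0 ≤ g2)
    (hrec : Tr * vc = (Tr - 1) * vp + g2) :
    0 ≤ (η / Real.sqrt (Tr - 1)) * (1/(Real.sqrt vp + ε))
        - (η / Real.sqrt Tr) * (1/(Real.sqrt vc + ε)) := by
  have hTm1 : (0:ℝ) < Tr - 1 := by linarith
  set r0 := Real.sqrt (Tr - 1) with hr0
  set r1 := Real.sqrt Tr with hr1
  set u0 := Real.sqrt vp with hu0
  set u1 := Real.sqrt vc with hu1
  have hr0p : 0 < r0 := Real.sqrt_pos.mpr hTm1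
  have hr1p : 0 < r1 := Real.sqrt_pos.mpr (by linarith)
  have hu0p : 0 < u0 := Real.sqrt_pos.mpr hvp
  have hu1p : 0 < u1 := Real.sqrt_pos.mpr hvc
  have hr01 : r0 ≤ r1 := Real.sqrt_le_sqrt (by linarith)
  have hw : r0 * u0 ≤ r1 * u1 := by
    have h1 : (Tr - 1) * vp ≤ Tr * vc := by linarith
    calc r0 * u0 = Real.sqrt ((Tr-1)*vp) := (Real.sqrt_mul (le_of_lt hTm1) _).symm
      _ ≤ Real.sqrt (Tr * vc) := Real.sqrt_le_sqrt h1
      _ = r1 * u1 := Real.sqrt_mul (by linarith) _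
  have ha : 0 < r0 * (u0 + ε) := by positivity
  have hb : 0 < r1 * (u1 + ε) := by positivity
  have hab : r0 * (u0 + ε) ≤ r1 * (u1 + ε) := by
    have : r0 * ε ≤ r1 * ε := by nlinarith
    nlinarith
  have key : η / (r1 * (u1 + ε)) ≤ η / (r0 * (u0 + ε)) :=
    div_le_div_of_nonneg_left (le_of_lt hη) ha hab
  have e1 : (η / r0) * (1/(u0 + ε)) = η / (r0 * (u0 + ε)) := by
    field_simp
  have e2 : (η / r1) * (1/(u1 + ε)) = η / (r1 * (u1 + ε)) := by
    field_simp
  rw [e1, e2]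
  linarith


set_option maxHeartbeats 1000000 in
lemma per_term (Tr η ε vp vc Sp Sc v₀ g2 : ℝ)
    (hTr : 10 ≤ Tr) (hη : 0 < η) (hε : 0 < ε)
    (hvp : 0 < vp) (hvc : 0 < vc) (hSp : 0 < Sp) (hv0 : 0 < v₀)
    (hg2 : 0 ≤ g2)
    (hrec : Tr * vc = (Tr - 1) * vp + g2)
    (hSc : Sc = Sp + g2)
    (h1 : 0.33 * Sc ≤ Tr * vc) (h2 : 0.33 * Sp ≤ (Tr - 1) * vp)
    (hv4 : 0.33 * v₀ ≤ vc) :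
    (η / Real.sqrt (Tr - 1)) * (1/(Real.sqrt vp + ε))
      - (η / Real.sqrt Tr) * (1/(Real.sqrt vc + ε))
      ≤ 6*η*(1/Real.sqrt Sp - 1/Real.sqrt Sc) + η/(2*Tr*Real.sqrt v₀) := by
  have hTm1 : (0:ℝ) < Tr - 1 := by linarith
  have hScp : 0 < Sc := by linarith
  set r0 := Real.sqrt (Tr - 1) with hr0d
  set r1 := Real.sqrt Tr with hr1d
  set u0 := Real.sqrt vp with hu0d
  set u1 := Real.sqrt vc with hu1d
  set s0 := Real.sqrt Sp with hs0d
  set s1 := Real.sqrt Sc with hs1d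
  set sv := Real.sqrt v₀ with hsvd
  have hr0p : 0 < r0 := Real.sqrt_pos.mpr hTm1
  have hr1p : 0 < r1 := Real.sqrt_pos.mpr (by linarith)
  have hu0p : 0 < u0 := Real.sqrt_pos.mpr hvp
  have hu1p : 0 < u1 := Real.sqrt_pos.mpr hvc
  have hs0p : 0 < s0 := Real.sqrt_pos.mpr hSp
  have hs1p : 0 < s1 := Real.sqrt_pos.mpr hScp
  have hsvp : 0 < sv := Real.sqrt_pos.mpr hv0
  have hr0sq : r0^2 = Tr - 1 := Real.sq_sqrt (le_of_lt hTm1)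
  have hr1sq : r1^2 = Tr := Real.sq_sqrt (by linarith)
  have hu0sq : u0^2 = vp := Real.sq_sqrt (le_of_lt hvp)
  have hu1sq : u1^2 = vc := Real.sq_sqrt (le_of_lt hvc)
  have hs0sq : s0^2 = Sp := Real.sq_sqrt (le_of_lt hSp)
  have hs1sq : s1^2 = Sc := Real.sq_sqrt (le_of_lt hScp)
  have hsvsq : sv^2 = v₀ := Real.sq_sqrt (le_of_lt hv0)
  have hr01 : r0 ≤ r1 := Real.sqrt_le_sqrt (by linarith)
  have hs01 : s0 ≤ s1 := Real.sqrt_le_sqrt (by linarith)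
  set w0 := r0 * u0 with hw0d
  set w1 := r1 * u1 with hw1d
  have hw0p : 0 < w0 := mul_pos hr0p hu0p
  have hw1p : 0 < w1 := mul_pos hr1p hu1p
  have hw0sq : w0^2 = (Tr - 1) * vp := by rw [hw0d, mul_pow, hr0sq, hu0sq]
  have hw1sq : w1^2 = Tr * vc := by rw [hw1d, mul_pow, hr1sq, hu1sq]
  have hsqdiff : w1^2 - w0^2 = s1^2 - s0^2 := by
    rw [hw0sq, hw1sq, hs0sq, hs1sq]; linarith
  have hkey : (w1 - w0) * (w1 + w0) = (s1 - s0) * (s1 + s0) := by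
    linear_combination hsqdiff
  have sqrt_step : ∀ x y : ℝ, 0 ≤ x → 0 < y → x^2 ≤ y^2 → x ≤ y := by
    intro x y hx hy hxy
    calc x = Real.sqrt (x^2) := (Real.sqrt_sq hx).symm
      _ ≤ Real.sqrt (y^2) := Real.sqrt_le_sqrt hxy
      _ = y := Real.sqrt_sq (le_of_lt hy)
  have hw01 : w0 ≤ w1 := by
    apply sqrt_step _ _ (le_of_lt hw0p) hw1p
    rw [hw0sq, hw1sq]; linarith
  have hw0s : 0.57 * s0 ≤ w0 := by
    apply sqrt_step _ _ (by positivity) hw0p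
    rw [hw0sq]; linarith [hs0sq, hSp, h2]
  have hw1s : 0.57 * s1 ≤ w1 := by
    apply sqrt_step _ _ (by positivity) hw1p
    rw [hw1sq]; linarith [hs1sq, hScp, h1]
  have hu1s : 0.57 * sv ≤ u1 := by
    apply sqrt_step _ _ (by positivity) hu1p
    rw [hu1sq]; linarith [hsvsq, hv0, hv4]
  have hr03 : 3 ≤ r0 := by
    apply sqrt_step _ _ (by norm_num) hr0p
    rw [hr0sq]; norm_num; linarith
  have hr13 : 3 ≤ r1 := by linarith
  set a := r0 * (u0 + ε) with had
  set b := r1 * (u1 + ε) with hbd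
  have hap : 0 < a := by positivity
  have hbp : 0 < b := by positivity
  have haw : w0 ≤ a := by
    rw [had, hw0d]
    have := (mul_pos hr0p hε).le
    linarith [this]
  have hbw : w1 ≤ b := by
    rw [hbd, hw1d]
    have := (mul_pos hr1p hε).le
    linarith [this]
  have e1 : (η / r0) * (1/(u0 + ε)) = η / a := by rw [had]; field_simp
  have e2 : (η / r1) * (1/(u1 + ε)) = η / b := by rw [hbd]; field_simp
  rw [e1, e2]
  have hsplit : η / a - η / b = η*(w1 - w0)/(a*b) + η*ε*(r1 - r0)/(a*b) := by
    rw [had, hbd, hw0d, hw1d]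
    field_simp
    ring
  rw [hsplit]
  have habw : w0 * w1 ≤ a * b :=
    mul_le_mul haw hbw (le_of_lt hw1p) (le_of_lt hap)
  have hB : η*(w1 - w0)/(a*b) ≤ 6*η*(1/s0 - 1/s1) := by
    have hB1 : η*(w1 - w0)/(a*b) ≤ η*(w1 - w0)/(w0*w1) :=
      div_le_div_of_nonneg_left (mul_nonneg (le_of_lt hη) (by linarith))
        (by positivity) habw
    have hB2 : η*(w1 - w0)/(w0*w1) ≤ 6*η*(1/s0 - 1/s1) := by
      have htgt : 6*η*(1/s0 - 1/s1) = 6*η*(s1 - s0)/(s0*s1) := by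
        field_simp
      rw [htgt, div_le_div_iff₀ (by positivity) (by positivity)]
      have p1 : 0.3249*(s0*s1) ≤ w0*w1 := by
        have := mul_le_mul hw0s hw1s (by positivity) (le_of_lt hw0p)
        linarith
      have p2 : 0.57*(s0+s1) ≤ w0+w1 := by linarith
      have p3 : (0.3249*(s0*s1))*(0.57*(s0+s1)) ≤ (w0*w1)*(w0+w1) :=
        mul_le_mul p1 p2 (by positivity) (le_of_lt (mul_pos hw0p hw1p))
      have hX : 0 ≤ (s1+s0)*(s0*s1) := by positivity
      have hA : (s1+s0)*(s0*s1) ≤ 6*((w0*w1)*(w0+w1)) := by linarith [p3, hX]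
      have h5 : (s1-s0)*((s1+s0)*(s0*s1)) ≤ (s1-s0)*(6*((w0*w1)*(w0+w1))) :=
        mul_le_mul_of_nonneg_left hA (by linarith)
      have h6 : ((w1-w0)*(s0*s1))*(w1+w0) ≤ (6*(s1-s0)*(w0*w1))*(w1+w0) := by
        calc ((w1-w0)*(s0*s1))*(w1+w0) = ((w1-w0)*(w1+w0))*(s0*s1) := by ring
          _ = ((s1-s0)*(s1+s0))*(s0*s1) := by rw [hkey]
          _ = (s1-s0)*((s1+s0)*(s0*s1)) := by ring
          _ ≤ (s1-s0)*(6*((w0*w1)*(w0+w1))) := h5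
          _ = (6*(s1-s0)*(w0*w1))*(w1+w0) := by ring
      have h7 : (w1-w0)*(s0*s1) ≤ 6*(s1-s0)*(w0*w1) :=
        le_of_mul_le_mul_right h6 (by positivity)
      have h8 := mul_le_mul_of_nonneg_left h7 (le_of_lt hη)
      linarith [h8]
    linarith
  have hC : η*ε*(r1 - r0)/(a*b) ≤ η/(2*Tr*sv) := by
    have ha2 : r0*ε ≤ a := by
      rw [had]
      have := (mul_pos hr0p hu0p).le
      linarith [this]
    have habw2 : (r0*ε)*w1 ≤ a * b :=
      mul_le_mul ha2 hbw (le_of_lt hw1p) (le_of_lt hap)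
    have hC1 : η*ε*(r1 - r0)/(a*b) ≤ η*ε*(r1 - r0)/((r0*ε)*w1) :=
      div_le_div_of_nonneg_left
        (mul_nonneg (mul_nonneg (le_of_lt hη) (le_of_lt hε)) (by linarith))
        (by positivity) habw2
    have hC2 : η*ε*(r1 - r0)/((r0*ε)*w1) = η*(r1 - r0)/(r0*w1) := by
      rw [div_eq_div_iff (by positivity) (by positivity)]
      ring
    have hid : (r1 - r0)*(r1 + r0) = 1 := by
      linear_combination hr1sq - hr0sq
    have h6' : (r1-r0)*(2*r0) ≤ 1 := by
      have hx : 0 ≤ r1 - r0 := by linarith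
      have := mul_le_mul_of_nonneg_left (show 2*r0 ≤ r1+r0 by linarith) hx
      linarith [hid, this]
    have h3r1 : 3*r1 ≤ Tr := by
      linarith [mul_nonneg (sub_nonneg.mpr hr13) (le_of_lt hr1p), hr1sq]
    have e7 : 2*r1 ≤ 1.14*r0^2 := by
      rw [hr0sq]; linarith
    have hr' : 2*r1^2*(r1-r0) ≤ 0.57*(r0*r1) := by
      have m1 : 2*r1^2*((r1-r0)*(2*r0)) ≤ 2*r1^2*1 :=
        mul_le_mul_of_nonneg_left h6' (by positivity)
      have m2 : 2*r1*r1 ≤ 1.14*r0^2*r1 :=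
        mul_le_mul_of_nonneg_right e7 (le_of_lt hr1p)
      have m3 : (2*r1^2*(r1-r0))*(2*r0) ≤ (0.57*(r0*r1))*(2*r0) := by
        calc (2*r1^2*(r1-r0))*(2*r0) = 2*r1^2*((r1-r0)*(2*r0)) := by ring
          _ ≤ 2*r1^2*1 := m1
          _ = 2*r1*r1 := by ring
          _ ≤ 1.14*r0^2*r1 := m2
          _ = (0.57*(r0*r1))*(2*r0) := by ring
      exact le_of_mul_le_mul_right m3 (by positivity)
    have hC3 : η*(r1 - r0)/(r0*w1) ≤ η/(2*Tr*sv) := by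
      rw [div_le_div_iff₀ (by positivity) (by positivity), hw1d, ← hr1sq]
      have k1 : 2*r1^2*(r1-r0)*sv ≤ 0.57*(r0*r1)*sv :=
        mul_le_mul_of_nonneg_right hr' (le_of_lt hsvp)
      have k2 : 0.57*(r0*r1)*sv ≤ r0*(r1*u1) := by
        have := mul_le_mul_of_nonneg_left hu1s (le_of_lt (mul_pos hr0p hr1p))
        linarith [this]
      have k3 := mul_le_mul_of_nonneg_left (le_trans k1 k2) (le_of_lt hη)
      linarith [k3]
    calc η*ε*(r1 - r0)/(a*b) ≤ η*ε*(r1 - r0)/((r0*ε)*w1) := hC1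
      _ = η*(r1 - r0)/(r0*w1) := hC2
      _ ≤ η/(2*Tr*sv) := hC3
  linarith


set_option maxHeartbeats 1000000 in
theorem stmt_19 (T : ℕ) (hT : 10 ≤ T) (η v₀ ε : ℝ)
    (hη : 0 < η) (hv : 0 < v₀) (hε : 0 < ε)
    (g : ℕ → ℝ) (v : ℕ → ℝ) (h0 : v 0 = v₀)
    (hrec : ∀ t, 1 ≤ t → t ≤ T →
      v t = (1 - 1 / (T : ℝ)) * v (t - 1) + (1 / (T : ℝ)) * (g t) ^ 2)
    (Δ : ℕ → ℝ)
    (hΔ : ∀ t, Δ t = (η / Real.sqrt ((T : ℝ) - 1)) * (1 / (Real.sqrt (v (t - 1)) + ε))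
      - (η / Real.sqrt T) * (1 / (Real.sqrt (v t) + ε)))
    (S : ℕ → ℝ) (hS : ∀ t, S t = v₀ + ∑ s ∈ Finset.Icc 1 t, (g s) ^ 2) :
    (∀ t, 1 ≤ t → t ≤ T → 0 ≤ Δ t) ∧
    (∑ t ∈ Finset.Icc 1 T, Δ t
        ≤ 6 * η * (1 / Real.sqrt v₀ - 1 / Real.sqrt (S T)) + η / (2 * Real.sqrt v₀)) ∧
    (6 * η * (1 / Real.sqrt v₀ - 1 / Real.sqrt (S T)) + η / (2 * Real.sqrt v₀)
        ≤ (13 / (2 * Real.sqrt v₀)) * η) := by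
  have hT1 : 1 ≤ T := by omega
  have hTR : (10:ℝ) ≤ (T:ℝ) := by exact_mod_cast hT
  have hTpos : (0:ℝ) < T := by linarith
  have hTne : (T:ℝ) ≠ 0 := ne_of_gt hTpos
  set q : ℝ := 1 - 1/(T:ℝ) with hqd
  have hq0 : 0 < q := by
    rw [hqd]
    have : 1/(T:ℝ) ≤ 1/10 := by apply one_div_le_one_div_of_le <;> linarith
    linarith
  have hq1 : q ≤ 1 := by
    rw [hqd]
    have : 0 < 1/(T:ℝ) := by positivity
    linarith
  have hS0 : S 0 = v₀ := by rw [hS]; simp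
  have hSsucc : ∀ t : ℕ, S (t+1) = S t + g (t+1)^2 := by
    intro t
    rw [hS, hS, Finset.sum_Icc_succ_top (by omega : 1 ≤ t+1)]
    ring
  have hSv : ∀ t, v₀ ≤ S t := by
    intro t; rw [hS]
    have : 0 ≤ ∑ s ∈ Finset.Icc 1 t, g s ^ 2 :=
      Finset.sum_nonneg fun i _ => sq_nonneg _
    linarith
  have hSpos : ∀ t, 0 < S t := fun t => lt_of_lt_of_le hv (hSv t)
  have key : ∀ t, t ≤ T → v₀ * q^t ≤ v t ∧ q^t * S t ≤ (T:ℝ) * v t := by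
    intro t
    induction t with
    | zero =>
      intro _
      constructor
      · simp [h0]
      · rw [hS0, h0, pow_zero, one_mul]
        nlinarith [mul_nonneg (show (0:ℝ) ≤ (T:ℝ)-1 by linarith) (le_of_lt hv)]
    | succ n ih =>
      intro hn
      have hnT : n ≤ T := by omega
      obtain ⟨ih1, ih2⟩ := ih hnT
      have hrn := hrec (n+1) (by omega) hn
      simp only [Nat.add_sub_cancel] at hrn
      have hg2 : (0:ℝ) ≤ g (n+1)^2 := sq_nonneg _
      have hgT : 0 ≤ (1/(T:ℝ)) * g (n+1)^2 := by positivity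
      constructor
      · calc v₀ * q^(n+1) = q * (v₀ * q^n) := by ring
          _ ≤ q * v n := mul_le_mul_of_nonneg_left ih1 (le_of_lt hq0)
          _ ≤ v (n+1) := by rw [hrn]; rw [hqd]; linarith
      · have hTv : (T:ℝ) * v (n+1) = q * ((T:ℝ) * v n) + g (n+1)^2 := by
          rw [hrn, hqd]; field_simp
        have hqp : q^(n+1) ≤ 1 := pow_le_one₀ (le_of_lt hq0) hq1
        have hl : q^(n+1) * g (n+1)^2 ≤ g (n+1)^2 := mul_le_of_le_one_left hg2 hqp
        have hih : q * (q^n * S n) ≤ q * ((T:ℝ) * v n) :=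
          mul_le_mul_of_nonneg_left ih2 (le_of_lt hq0)
        calc q^(n+1) * S (n+1) = q^(n+1) * S n + q^(n+1) * g (n+1)^2 := by
              rw [hSsucc]; ring
          _ = q * (q^n * S n) + q^(n+1) * g (n+1)^2 := by ring
          _ ≤ q * ((T:ℝ) * v n) + g (n+1)^2 := by linarith
          _ = (T:ℝ) * v (n+1) := hTv.symm
  have hqT : (0.33:ℝ) ≤ q^T := by rw [hqd]; exact aux_pow T hT
  have hqt : ∀ t, t ≤ T → (0.33:ℝ) ≤ q^t := by
    intro t ht
    calc (0.33:ℝ) ≤ q^T := hqT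
      _ ≤ q^t := pow_le_pow_of_le_one (le_of_lt hq0) hq1 ht
  have hv33 : ∀ t, t ≤ T → 0.33 * v₀ ≤ v t := by
    intro t ht
    have h1 := (key t ht).1
    have h33 := hqt t ht
    have := mul_le_mul_of_nonneg_left h33 (le_of_lt hv)
    linarith
  have hvpos : ∀ t, t ≤ T → 0 < v t := by
    intro t ht
    have := hv33 t ht
    linarith
  have hTv33 : ∀ t, t ≤ T → 0.33 * S t ≤ (T:ℝ) * v t := by
    intro t ht
    have h2 := (key t ht).2
    have h33 := hqt t ht
    have := mul_le_mul_of_nonneg_right h33 (le_of_lt (hSpos t))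
    linarith
  have hTv33' : ∀ t, 1 ≤ t → t ≤ T → 0.33 * S (t-1) ≤ ((T:ℝ)-1) * v (t-1) := by
    intro t h1t htT
    obtain ⟨n, rfl⟩ : ∃ n, t = n + 1 := ⟨t-1, by omega⟩
    simp only [Nat.add_sub_cancel]
    have hn : n ≤ T := by omega
    have hk := (key n hn).2
    have h33 := hqt (n+1) htT
    have hTinv : (T:ℝ) * (1/(T:ℝ)) = 1 := by field_simp
    have e : ((T:ℝ)-1) * v n = q * ((T:ℝ) * v n) := by
      rw [hqd]; linear_combination (v n) * hTinv
    have h1' : q * (q^n * S n) ≤ q * ((T:ℝ) * v n) :=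
      mul_le_mul_of_nonneg_left hk (le_of_lt hq0)
    have h2' : 0.33 * S n ≤ q^(n+1) * S n :=
      mul_le_mul_of_nonneg_right h33 (le_of_lt (hSpos n))
    have e2 : q^(n+1) * S n = q * (q^n * S n) := by ring
    linarith
  have hrecT : ∀ t, 1 ≤ t → t ≤ T → (T:ℝ) * v t = ((T:ℝ)-1) * v (t-1) + g t^2 := by
    intro t h1t htT
    have hTinv : (T:ℝ) * (1/(T:ℝ)) = 1 := by field_simp
    rw [hrec t h1t htT, hqd]
    linear_combination (g t^2 - v (t-1)) * hTinv
  have hpos : ∀ t, 1 ≤ t → t ≤ T → 0 ≤ Δ t := by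
    intro t h1t htT
    rw [hΔ t]
    exact per_term_nonneg (T:ℝ) η ε (v (t-1)) (v t) (g t^2) hTR hη hε
      (hvpos (t-1) (by omega)) (hvpos t htT) (sq_nonneg _) (hrecT t h1t htT)
  have hsvp : 0 < Real.sqrt v₀ := Real.sqrt_pos.mpr hv
  refine ⟨hpos, ?_, ?_⟩
  · have hterm : ∀ t ∈ Finset.Icc 1 T,
        Δ t ≤ 6*η*(1/Real.sqrt (S (t-1)) - 1/Real.sqrt (S t))
              + η/(2*(T:ℝ)*Real.sqrt v₀) := by
      intro t ht
      rw [Finset.mem_Icc] at ht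
      obtain ⟨h1t, htT⟩ := ht
      rw [hΔ t]
      have hSc : S t = S (t-1) + g t^2 := by
        obtain ⟨n, rfl⟩ : ∃ n, t = n+1 := ⟨t-1, by omega⟩
        simp only [Nat.add_sub_cancel]
        exact hSsucc n
      exact per_term (T:ℝ) η ε (v (t-1)) (v t) (S (t-1)) (S t) v₀ (g t^2)
        hTR hη hε (hvpos (t-1) (by omega)) (hvpos t htT) (hSpos (t-1)) hv
        (sq_nonneg _) (hrecT t h1t htT) hSc (hTv33 t htT) (hTv33' t h1t htT)
        (hv33 t htT)
    have htel : ∑ t ∈ Finset.Icc 1 T,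
        (6*η*(1/Real.sqrt (S (t-1)) - 1/Real.sqrt (S t)))
        = 6*η*(1/Real.sqrt (S 0)) - 6*η*(1/Real.sqrt (S T)) := by
      have step : ∑ t ∈ Finset.Icc 1 T,
          (6*η*(1/Real.sqrt (S (t-1)) - 1/Real.sqrt (S t)))
          = ∑ i ∈ Finset.range T,
              ((fun j => 6*η*(1/Real.sqrt (S j))) i
               - (fun j => 6*η*(1/Real.sqrt (S j))) (i+1)) := by
        rw [← Finset.Ico_add_one_right_eq_Icc, Finset.sum_Ico_eq_sum_range]
        simp only [Nat.add_sub_cancel]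
        apply Finset.sum_congr rfl
        intro i _
        have e1 : 1+i-1 = i := by omega
        have e2 : 1+i = i+1 := by omega
        rw [e1, e2]
        ring
      rw [step, Finset.sum_range_sub' (fun j => 6*η*(1/Real.sqrt (S j))) T]
    have hconst : ∑ _t ∈ Finset.Icc 1 T, (η/(2*(T:ℝ)*Real.sqrt v₀))
        = (T:ℝ) * (η/(2*(T:ℝ)*Real.sqrt v₀)) := by
      rw [Finset.sum_const, Nat.card_Icc]
      simp only [Nat.add_sub_cancel, nsmul_eq_mul]
    calc ∑ t ∈ Finset.Icc 1 T, Δ t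
        ≤ ∑ t ∈ Finset.Icc 1 T,
            (6*η*(1/Real.sqrt (S (t-1)) - 1/Real.sqrt (S t))
             + η/(2*(T:ℝ)*Real.sqrt v₀)) := Finset.sum_le_sum hterm
      _ = (6*η*(1/Real.sqrt (S 0)) - 6*η*(1/Real.sqrt (S T)))
          + (T:ℝ) * (η/(2*(T:ℝ)*Real.sqrt v₀)) := by
          rw [Finset.sum_add_distrib, htel, hconst]
      _ = 6 * η * (1 / Real.sqrt v₀ - 1 / Real.sqrt (S T)) + η / (2 * Real.sqrt v₀) := by
          rw [hS0]
          have hsne : Real.sqrt v₀ ≠ 0 := ne_of_gt hsvp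
          field_simp
  · have h1ST : 0 ≤ 1/Real.sqrt (S T) := by positivity
    have e1 : 6*η*(1/Real.sqrt v₀ - 1/Real.sqrt (S T)) ≤ 6*η*(1/Real.sqrt v₀) := by
      have := mul_le_mul_of_nonneg_left
        (sub_le_self (1/Real.sqrt v₀) h1ST) (show (0:ℝ) ≤ 6*η by positivity)
      linarith
    have e2 : 6*η*(1/Real.sqrt v₀) + η/(2*Real.sqrt v₀) = 13/(2*Real.sqrt v₀)*η := by
      field_simp
      ring
    linarith
end
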